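/- arXiv:1404.1731 — 6 statements merged into one kernel-verified Lean document; each statement's English description precedes it below -/
import Mathlib

section
/- Let d = d₁ + d₂ with d₁, d₂ ≥ 1, let α ∈ (0,2), δ > 0 and p ∈ (1,∞). Then there exists a constant C > 0 such that for every f ∈ C_c^∞(ℝ^d), the function ℒf belongs to L^p(ℝ^d) and ‖ℒf‖_{L^p(ℝ^d)} ≤ C‖f‖_{L^p(ℝ^d)}. -/
open MeasureTheory Set
open scoped ContDiff ENNReal NNReal
lemma aux_coord_le_norm {n : ℕ} (v : EuclideanSpace ℝ (Fin n)) (i : Fin n) : |v i| ≤ ‖v‖ := by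
  rw [EuclideanSpace.norm_eq, ← Real.sqrt_sq_eq_abs]
  refine Real.sqrt_le_sqrt ?_
  simp only [Real.norm_eq_abs, sq_abs]
  exact Finset.single_le_sum (f := fun j => v j ^ 2) (fun j _ => sq_nonneg _) (Finset.mem_univ i)

lemma aux_norm_le_sum {n : ℕ} (v : EuclideanSpace ℝ (Fin n)) : ‖v‖ ≤ ∑ i, |v i| := by
  rw [EuclideanSpace.norm_eq]
  simp only [Real.norm_eq_abs, sq_abs]
  have h1 : ∑ i, v i ^ 2 ≤ (∑ i, |v i|) ^ 2 := by
    calc ∑ i, v i ^ 2 = ∑ i, |v i| ^ 2 := by simp [sq_abs]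
    _ ≤ (∑ i, |v i|) ^ 2 := Finset.sum_sq_le_sq_sum_of_nonneg (fun i _ => abs_nonneg _)
  calc Real.sqrt (∑ i, v i ^ 2) ≤ Real.sqrt ((∑ i, |v i|) ^ 2) := Real.sqrt_le_sqrt h1
  _ = ∑ i, |v i| := Real.sqrt_sq (Finset.sum_nonneg fun i _ => abs_nonneg _)

lemma aux_toEuclideanLin_coord {n : ℕ} (M : Matrix (Fin n) (Fin n) ℝ)
    (v : EuclideanSpace ℝ (Fin n)) (i : Fin n) :
    Matrix.toEuclideanLin M v i = ∑ j, M i j * v j := rfl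

lemma aux_opnorm {n : ℕ} (M : Matrix (Fin n) (Fin n) ℝ) {B : ℝ} (hB : 0 ≤ B)
    (h : ∀ i j, |M i j| ≤ B) (v : EuclideanSpace ℝ (Fin n)) :
    ‖Matrix.toEuclideanLin M v‖ ≤ ((n : ℝ) * ((n : ℝ) * B)) * ‖v‖ := by
  calc ‖Matrix.toEuclideanLin M v‖ ≤ ∑ i, |Matrix.toEuclideanLin M v i| := aux_norm_le_sum _
  _ ≤ ∑ _i : Fin n, ((n : ℝ) * B) * ‖v‖ := by
      refine Finset.sum_le_sum fun i _ => ?_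
      rw [aux_toEuclideanLin_coord]
      calc |∑ j, M i j * v j| ≤ ∑ j, |M i j * v j| := Finset.abs_sum_le_sum_abs _ _
      _ ≤ ∑ _j : Fin n, B * ‖v‖ := by
          refine Finset.sum_le_sum fun j _ => ?_
          rw [abs_mul]
          exact mul_le_mul (h i j) (aux_coord_le_norm v j) (abs_nonneg _)
            hB
      _ = (n : ℝ) * B * ‖v‖ := by simp [Finset.sum_const]; ring
  _ = (n : ℝ) * ((n : ℝ) * B) * ‖v‖ := by simp [Finset.sum_const]; ring

lemma aux_rpow_add (x : ℝ≥0∞) {y z : ℝ} (hy : 0 < y) (hz : 0 < z) :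
    x ^ (y + z) = x ^ y * x ^ z := ENNReal.rpow_add_of_nonneg _ _ hy.le hz.le

lemma aux_kernel_lt_top {n : ℕ} (hn : 0 < n) {s c : ℝ} (hs : (n : ℝ) < s) (hc : 0 < c) :
    ∫⁻ z : EuclideanSpace ℝ (Fin n),
      (if c ≤ ‖z‖ then ENNReal.ofReal (‖z‖ ^ (-s)) else 0) < ⊤ := by
  have hint : Integrable (fun z : EuclideanSpace ℝ (Fin n) => (1 + ‖z‖) ^ (-s)) := by
    apply integrable_one_add_norm
    simpa [finrank_euclideanSpace_fin] using hs
  have hpt : ∀ z : EuclideanSpace ℝ (Fin n),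
      (if c ≤ ‖z‖ then ENNReal.ofReal (‖z‖ ^ (-s)) else 0)
        ≤ ENNReal.ofReal ((1 + 1 / c) ^ s) * ENNReal.ofReal ((1 + ‖z‖) ^ (-s)) := by
    intro z
    by_cases hz : c ≤ ‖z‖
    · have hz0 : 0 < ‖z‖ := lt_of_lt_of_le hc hz
      rw [if_pos hz, ← ENNReal.ofReal_mul (by positivity)]
      apply ENNReal.ofReal_le_ofReal
      have h1 : 1 + ‖z‖ ≤ (1 + 1 / c) * ‖z‖ := by
        have h5 : 1 ≤ ‖z‖ / c := (one_le_div hc).2 hz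
        have h6 : (1 + 1/c) * ‖z‖ = ‖z‖ + ‖z‖ / c := by ring
        rw [h6]; linarith
      have h2 : ((1 + 1 / c) * ‖z‖) ^ (-s) ≤ (1 + ‖z‖) ^ (-s) :=
        Real.rpow_le_rpow_of_nonpos (by positivity) h1 (by
          have : (0:ℝ) < s := lt_of_le_of_lt (Nat.cast_nonneg n) hs
          linarith)
      have h3 : ((1 + 1 / c) * ‖z‖) ^ (-s) = (1 + 1/c) ^ (-s) * ‖z‖ ^ (-s) :=
        Real.mul_rpow (by positivity) (by positivity)
      have h4 : (1 + 1/c) ^ s * ((1+1/c) ^ (-s)) = 1 := by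
        rw [← Real.rpow_add (by positivity)]; simp
      calc ‖z‖ ^ (-s) = (1+1/c)^s * ((1+1/c)^(-s) * ‖z‖ ^ (-s)) := by
            rw [← mul_assoc, h4, one_mul]
      _ = (1+1/c)^s * (((1 + 1/c) * ‖z‖) ^ (-s)) := by rw [h3]
      _ ≤ (1+1/c)^s * ((1 + ‖z‖) ^ (-s)) := by
            exact mul_le_mul_of_nonneg_left h2 (by positivity)
    · rw [if_neg hz]; exact zero_le
  calc ∫⁻ z : EuclideanSpace ℝ (Fin n), (if c ≤ ‖z‖ then ENNReal.ofReal (‖z‖ ^ (-s)) else 0)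
      ≤ ∫⁻ z : EuclideanSpace ℝ (Fin n),
        ENNReal.ofReal ((1 + 1 / c) ^ s) * ENNReal.ofReal ((1 + ‖z‖) ^ (-s)) :=
        lintegral_mono hpt
  _ = ENNReal.ofReal ((1 + 1 / c) ^ s) *
        ∫⁻ z : EuclideanSpace ℝ (Fin n), ENNReal.ofReal ((1 + ‖z‖) ^ (-s)) :=
        lintegral_const_mul' _ _ ENNReal.ofReal_ne_top
  _ < ⊤ := by
      refine ENNReal.mul_lt_top ENNReal.ofReal_lt_top ?_
      have := hint.2
      rw [hasFiniteIntegral_iff_norm] at this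
      refine lt_of_le_of_lt (lintegral_mono fun z => ?_) this
      exact ENNReal.ofReal_le_ofReal (le_abs_self _)

lemma aux_toEuclideanLin_one {n : ℕ} (v : EuclideanSpace ℝ (Fin n)) :
    Matrix.toEuclideanLin (1 : Matrix (Fin n) (Fin n) ℝ) v = v := by
  simp [Matrix.toEuclideanLin_apply, Matrix.one_mulVec]

lemma aux_toEuclideanLin_mul {n : ℕ} (M N : Matrix (Fin n) (Fin n) ℝ)
    (v : EuclideanSpace ℝ (Fin n)) :
    Matrix.toEuclideanLin (M * N) v
      = Matrix.toEuclideanLin M (Matrix.toEuclideanLin N v) := by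
  simp [Matrix.toEuclideanLin_apply, Matrix.mulVec_mulVec]

lemma aux_block_entry {d₁ d₂ : ℕ} (M : Matrix (Fin d₂) (Fin d₂) ℝ) {B : ℝ}
    (hB : ∀ i j, |M i j| ≤ B) (i j : Fin (d₁ + d₂)) :
    |((Matrix.fromBlocks (1 : Matrix (Fin d₁) (Fin d₁) ℝ) 0 0 M).submatrix
        finSumFinEquiv.symm finSumFinEquiv.symm) i j| ≤ max B 1 := by
  rw [Matrix.submatrix_apply]
  have h01 : (0:ℝ) ≤ max B 1 := le_trans zero_le_one (le_max_right B 1)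
  rcases h1 : finSumFinEquiv.symm i with i' | i' <;> rcases h2 : finSumFinEquiv.symm j with j' | j'
  · rw [Matrix.fromBlocks_apply₁₁, Matrix.one_apply]
    split_ifs <;> simpa using h01.trans_eq' (by norm_num) |>.trans le_rfl
  · rw [Matrix.fromBlocks_apply₁₂]; simpa using h01
  · rw [Matrix.fromBlocks_apply₂₁]; simpa using h01
  · rw [Matrix.fromBlocks_apply₂₂]
    exact le_trans (hB i' j') (le_max_left B 1)

set_option maxHeartbeats 2000000 in
/-- Let `d = d₁ + d₂`, `α ∈ (0,2)`, `δ > 0`, `p ∈ (1,∞)`. With `σ₀` smooth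
with bounded derivatives of all orders and uniformly bounded inverse, `σ(x)` the block matrix
`[[0,0],[0,σ₀(x)]]`, `χ` a smooth cutoff equal to `1` on `[0,δ/2]` and `0` on `[δ,∞)`, and
`ℒf(x) = ∫_{ℝ^d∖{0}} (f(x+σ(x)z) - f(x)) (1-χ(|z|)) |z|^{-(d+α)} dz`, there exists `C > 0`
such that for every `f ∈ C_c^∞(ℝ^d)`, `ℒf ∈ L^p` and `‖ℒf‖_{L^p} ≤ C ‖f‖_{L^p}`. -/
theorem stmt_0 (d₁ d₂ : ℕ) (hd₁ : 1 ≤ d₁) (hd₂ : 1 ≤ d₂)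
    (α : ℝ) (hα : α ∈ Ioo (0:ℝ) 2) (δ : ℝ) (hδ : 0 < δ)
    (p : ℝ≥0∞) (hp1 : 1 < p) (hp2 : p < ⊤)
    (σ₀ σ₀inv : EuclideanSpace ℝ (Fin (d₁ + d₂)) → Matrix (Fin d₂) (Fin d₂) ℝ)
    (hσ₀smooth : ∀ i j, ContDiff ℝ ∞ (fun x => σ₀ x i j))
    (hσ₀bdd : ∀ (n : ℕ) (i j : Fin d₂), ∃ B, ∀ x,
      ‖iteratedFDeriv ℝ n (fun x => σ₀ x i j) x‖ ≤ B)
    (hinv : ∀ x, σ₀ x * σ₀inv x = 1)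
    (hinvbdd : ∃ B, ∀ x i j, |σ₀inv x i j| ≤ B)
    (σ : EuclideanSpace ℝ (Fin (d₁ + d₂)) → Matrix (Fin (d₁ + d₂)) (Fin (d₁ + d₂)) ℝ)
    (hσ : ∀ x, σ x = (Matrix.fromBlocks (0 : Matrix (Fin d₁) (Fin d₁) ℝ)
      (0 : Matrix (Fin d₁) (Fin d₂) ℝ) (0 : Matrix (Fin d₂) (Fin d₁) ℝ)
      (σ₀ x)).submatrix finSumFinEquiv.symm finSumFinEquiv.symm)
    (χ : ℝ → ℝ) (hχsmooth : ContDiff ℝ ∞ χ)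
    (hχrange : ∀ r, χ r ∈ Icc (0:ℝ) 1)
    (hχ1 : ∀ r ∈ Icc (0:ℝ) (δ / 2), χ r = 1)
    (hχ0 : ∀ r, δ ≤ r → χ r = 0)
    (L : (EuclideanSpace ℝ (Fin (d₁ + d₂)) → ℝ) →
      EuclideanSpace ℝ (Fin (d₁ + d₂)) → ℝ)
    (hL : ∀ f x, L f x = ∫ z in ({0}ᶜ : Set (EuclideanSpace ℝ (Fin (d₁ + d₂)))),
      (f (x + Matrix.toEuclideanLin (σ x) z) - f x) *
        ((1 - χ ‖z‖) * ‖z‖ ^ (-(((d₁ + d₂ : ℕ) : ℝ) + α)))) :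
    ∃ C > (0:ℝ), ∀ f : EuclideanSpace ℝ (Fin (d₁ + d₂)) → ℝ,
      ContDiff ℝ ∞ f → HasCompactSupport f →
      MemLp (L f) p volume ∧
      eLpNorm (L f) p volume ≤ ENNReal.ofReal C * eLpNorm f p volume := by
  classical
  obtain ⟨hα0, hα2⟩ := hα
  have hd : 0 < d₁ + d₂ := by omega
  set s : ℝ := ((d₁ + d₂ : ℕ) : ℝ) + α with hs_def
  have hdr_lt : ((d₁ + d₂ : ℕ) : ℝ) < s := by
    rw [hs_def]; linarith
  have hs_pos : 0 < s := lt_of_le_of_lt (Nat.cast_nonneg _) hdr_lt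
  -- exponents
  have hp0 : p ≠ 0 := (lt_trans zero_lt_one hp1).ne'
  have hptop : p ≠ ⊤ := hp2.ne
  set pr : ℝ := p.toReal with hpr_def
  have hpr1 : 1 < pr := by
    have h := (ENNReal.toReal_lt_toReal ENNReal.one_ne_top hptop).2 hp1
    simpa using h
  have hpr0 : 0 < pr := lt_trans zero_lt_one hpr1
  set qr : ℝ := pr.conjExponent with hqr_def
  have hpq : pr.HolderConjugate qr := Real.HolderConjugate.conjExponent hpr1
  have hqr0 : 0 < qr := lt_trans zero_lt_one hpq.symm.lt
  have hsum : 1/pr + 1/qr = 1 := by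
    rw [one_div, one_div]; exact hpq.inv_add_inv_eq_one
  -- entry bounds
  have hB₀ : ∃ B₀ : ℝ, ∀ x i j, |σ₀ x i j| ≤ B₀ := by
    choose Bf hBf using fun q : Fin d₂ × Fin d₂ => hσ₀bdd 0 q.1 q.2
    have hne : (Finset.univ : Finset (Fin d₂ × Fin d₂)).Nonempty :=
      ⟨(⟨0, hd₂⟩, ⟨0, hd₂⟩), Finset.mem_univ _⟩
    refine ⟨Finset.univ.sup' hne Bf, fun x i j => ?_⟩
    have h1 := hBf (i, j) x
    rw [norm_iteratedFDeriv_zero] at h1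
    calc |σ₀ x i j| = ‖σ₀ x i j‖ := (Real.norm_eq_abs _).symm
    _ ≤ Bf (i, j) := h1
    _ ≤ _ := Finset.le_sup' Bf (Finset.mem_univ _)
  obtain ⟨B₀, hB₀⟩ := hB₀
  obtain ⟨Binv, hBinv⟩ := hinvbdd
  -- the auxiliary matrices
  set e : Fin (d₁ + d₂) ≃ (Fin d₁ ⊕ Fin d₂) := finSumFinEquiv.symm with he_def
  set A : EuclideanSpace ℝ (Fin (d₁ + d₂)) → Matrix (Fin (d₁ + d₂)) (Fin (d₁ + d₂)) ℝ :=
    fun x => (Matrix.fromBlocks 1 0 0 (σ₀ x)).submatrix e e with hA_def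
  set A' : EuclideanSpace ℝ (Fin (d₁ + d₂)) → Matrix (Fin (d₁ + d₂)) (Fin (d₁ + d₂)) ℝ :=
    fun x => (Matrix.fromBlocks 1 0 0 (σ₀inv x)).submatrix e e with hA'_def
  set P : Matrix (Fin (d₁ + d₂)) (Fin (d₁ + d₂)) ℝ :=
    (Matrix.fromBlocks 0 0 0 1).submatrix e e with hP_def
  have hinv' : ∀ x, σ₀inv x * σ₀ x = 1 := fun x => (mul_eq_one_comm).1 (hinv x)
  have hPA : ∀ x, σ x = P * A x := by
    intro x
    rw [hσ, hP_def, hA_def, Matrix.submatrix_mul_equiv, Matrix.fromBlocks_multiply]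
    simp
  have hA'A : ∀ x, A' x * A x = 1 := by
    intro x
    rw [hA'_def, hA_def, Matrix.submatrix_mul_equiv, Matrix.fromBlocks_multiply]
    simp [hinv' x, Matrix.fromBlocks_one]
  have hdetA : ∀ x, (A x).det = (σ₀ x).det := by
    intro x
    rw [hA_def]
    simp only []
    rw [Matrix.det_submatrix_equiv_self, Matrix.det_fromBlocks_zero₂₁, Matrix.det_one, one_mul]
  have hdet0 : ∀ x, (σ₀ x).det ≠ 0 := by
    intro x h
    have := Matrix.det_mul (σ₀ x) (σ₀inv x)
    rw [hinv x, Matrix.det_one, h, zero_mul] at this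
    norm_num at this
  have hdetinv : ∀ x, (σ₀ x).det * (σ₀inv x).det = 1 := by
    intro x
    rw [← Matrix.det_mul, hinv x, Matrix.det_one]
  -- operator norm constants
  set BA : ℝ := max B₀ 1 with hBA_def
  set BI : ℝ := max Binv 1 with hBI_def
  have hBA0 : 0 ≤ BA := le_trans zero_le_one (le_max_right _ _)
  have hBI0 : 0 ≤ BI := le_trans zero_le_one (le_max_right _ _)
  set NA : ℝ := ((d₁ + d₂ : ℕ) : ℝ) * (((d₁ + d₂ : ℕ) : ℝ) * BA) with hNA_def
  set NI : ℝ := ((d₁ + d₂ : ℕ) : ℝ) * (((d₁ + d₂ : ℕ) : ℝ) * BI) with hNI_def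
  have hn0 : (0:ℝ) < ((d₁ + d₂ : ℕ) : ℝ) := by exact_mod_cast hd
  have hNA0 : 0 < NA := by
    have h1 : (0:ℝ) < BA := lt_of_lt_of_le zero_lt_one (le_max_right _ _)
    positivity
  have hNI0 : 0 < NI := by
    have h1 : (0:ℝ) < BI := lt_of_lt_of_le zero_lt_one (le_max_right _ _)
    positivity
  have hAop : ∀ x (v : EuclideanSpace ℝ (Fin (d₁ + d₂))), ‖Matrix.toEuclideanLin (A x) v‖ ≤ NA * ‖v‖ := by
    intro x v
    exact aux_opnorm (A x) hBA0 (fun i j => aux_block_entry (σ₀ x) (hB₀ x) i j) v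
  have hA'op : ∀ x (v : EuclideanSpace ℝ (Fin (d₁ + d₂))), ‖Matrix.toEuclideanLin (A' x) v‖ ≤ NI * ‖v‖ := by
    intro x v
    exact aux_opnorm (A' x) hBI0 (fun i j => aux_block_entry (σ₀inv x) (hBinv x) i j) v
  -- determinant bound
  set ND : ℝ := (Nat.factorial d₂ : ℝ) * BI ^ d₂ with hND_def
  have hND : ∀ x, |(σ₀inv x).det| ≤ ND := by
    intro x
    have h := Matrix.det_le (A := σ₀inv x) (abv := AbsoluteValue.abs)
      (x := BI) (fun i j => le_trans (hBinv x i j) (le_max_left _ _))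
    simpa [hND_def, Fintype.card_fin, nsmul_eq_mul] using h
  have hdet_lb : ∀ x, 1 ≤ |(σ₀ x).det| * ND := by
    intro x
    have h1 : |(σ₀ x).det| * |(σ₀inv x).det| = 1 := by
      rw [← abs_mul, hdetinv x, abs_one]
    calc (1:ℝ) = |(σ₀ x).det| * |(σ₀inv x).det| := h1.symm
    _ ≤ |(σ₀ x).det| * ND := by
        exact mul_le_mul_of_nonneg_left (hND x) (abs_nonneg _)
  -- kernels
  set k : EuclideanSpace ℝ (Fin (d₁ + d₂)) → ℝ≥0∞ := fun z => ENNReal.ofReal ((1 - χ ‖z‖) * ‖z‖ ^ (-s)) with hk_def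
  set Kb : EuclideanSpace ℝ (Fin (d₁ + d₂)) → ℝ≥0∞ :=
    fun z => if δ / 2 ≤ ‖z‖ then ENNReal.ofReal (‖z‖ ^ (-s)) else 0 with hKb_def
  set c : ℝ := (δ / 2) / NI with hc_def
  have hc0 : 0 < c := by rw [hc_def]; positivity
  set CK : ℝ := ND * NA ^ s with hCK_def
  have hCK0 : 0 ≤ CK := by
    rw [hCK_def, hND_def]
    positivity
  set Kt : EuclideanSpace ℝ (Fin (d₁ + d₂)) → ℝ≥0∞ := fun w => ENNReal.ofReal CK *
    (if c ≤ ‖w‖ then ENNReal.ofReal (‖w‖ ^ (-s)) else 0) with hKt_def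
  set M₀ : ℝ≥0∞ := ∫⁻ z, Kb z with hM₀_def
  have hM₀top : M₀ < ⊤ := by
    rw [hM₀_def, hKb_def]
    exact aux_kernel_lt_top hd hdr_lt (by positivity)
  set Mt : ℝ≥0∞ := ∫⁻ w, Kt w with hMt_def
  have hMttop : Mt < ⊤ := by
    rw [hMt_def, hKt_def]
    calc ∫⁻ (w : EuclideanSpace ℝ (Fin (d₁ + d₂))), ENNReal.ofReal CK * (if c ≤ ‖w‖ then ENNReal.ofReal (‖w‖ ^ (-s)) else 0)
        = ENNReal.ofReal CK * ∫⁻ (w : EuclideanSpace ℝ (Fin (d₁ + d₂))), (if c ≤ ‖w‖ then ENNReal.ofReal (‖w‖ ^ (-s)) else 0) :=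
        lintegral_const_mul' _ _ ENNReal.ofReal_ne_top
    _ < ⊤ := ENNReal.mul_lt_top ENNReal.ofReal_lt_top (aux_kernel_lt_top hd hdr_lt hc0)
  -- kernel comparison with Kb
  have hkKb : ∀ z : EuclideanSpace ℝ (Fin (d₁ + d₂)), k z ≤ Kb z := by
    intro z
    rw [hk_def, hKb_def]
    beta_reduce
    by_cases hz : δ / 2 ≤ ‖z‖
    · rw [if_pos hz]
      apply ENNReal.ofReal_le_ofReal
      have h1 : 1 - χ ‖z‖ ≤ 1 := by
        have := (hχrange ‖z‖).1; linarith
      have h2 : 0 ≤ ‖z‖ ^ (-s) := Real.rpow_nonneg (norm_nonneg _) _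
      calc (1 - χ ‖z‖) * ‖z‖ ^ (-s) ≤ 1 * ‖z‖ ^ (-s) := by
            apply mul_le_mul_of_nonneg_right h1 h2
      _ = ‖z‖ ^ (-s) := one_mul _
    · rw [if_neg hz]
      have h1 : χ ‖z‖ = 1 := hχ1 _ ⟨norm_nonneg _, le_of_not_ge hz⟩
      simp [h1]
  -- the key kernel transfer estimate
  have hker : ∀ (x : EuclideanSpace ℝ (Fin (d₁ + d₂))) (z : EuclideanSpace ℝ (Fin (d₁ + d₂))), k z ≤
      ENNReal.ofReal |(σ₀ x).det| * Kt (Matrix.toEuclideanLin (A x) z) := by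
    intro x z
    by_cases hz : δ / 2 < ‖z‖
    · set w : EuclideanSpace ℝ (Fin (d₁ + d₂)) := Matrix.toEuclideanLin (A x) z with hw_def
      have hz0 : 0 < ‖z‖ := lt_trans (by positivity) hz
      have hzw : ‖z‖ ≤ NI * ‖w‖ := by
        have h1 : Matrix.toEuclideanLin (A' x) w = z := by
          rw [hw_def, ← aux_toEuclideanLin_mul, hA'A x]
          exact aux_toEuclideanLin_one z
        calc ‖z‖ = ‖Matrix.toEuclideanLin (A' x) w‖ := by rw [h1]
        _ ≤ NI * ‖w‖ := hA'op x w
      have hw0 : 0 < ‖w‖ := by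
        rcases (norm_nonneg w).lt_or_eq with h | h
        · exact h
        · exfalso
          have h2 : ‖z‖ ≤ NI * ‖w‖ := hzw
          rw [← h, mul_zero] at h2
          linarith
      have hcw : c ≤ ‖w‖ := by
        rw [hc_def, div_le_iff₀ hNI0]
        calc δ / 2 ≤ ‖z‖ := hz.le
        _ ≤ NI * ‖w‖ := hzw
        _ = ‖w‖ * NI := mul_comm _ _
      have hwz : ‖w‖ ≤ NA * ‖z‖ := hAop x z
      rw [hk_def, hKt_def]
      beta_reduce
      rw [if_pos hcw]
      rw [← ENNReal.ofReal_mul hCK0, ← ENNReal.ofReal_mul (abs_nonneg _)]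
      apply ENNReal.ofReal_le_ofReal
      have h2 : 0 ≤ ‖z‖ ^ (-s) := Real.rpow_nonneg (norm_nonneg _) _
      have hLHS : (1 - χ ‖z‖) * ‖z‖ ^ (-s) ≤ ‖z‖ ^ (-s) := by
        have := (hχrange ‖z‖).1
        calc (1 - χ ‖z‖) * ‖z‖ ^ (-s) ≤ 1 * ‖z‖ ^ (-s) :=
          mul_le_mul_of_nonneg_right (by linarith) h2
        _ = ‖z‖ ^ (-s) := one_mul _
      have hmid : ‖z‖ ^ (-s) ≤ NA ^ s * ‖w‖ ^ (-s) := by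
        have h3 : (NA * ‖z‖) ^ (-s) ≤ ‖w‖ ^ (-s) :=
          Real.rpow_le_rpow_of_nonpos hw0 hwz (neg_nonpos.2 hs_pos.le)
        have h4 : (NA * ‖z‖) ^ (-s) = NA ^ (-s) * ‖z‖ ^ (-s) :=
          Real.mul_rpow hNA0.le (norm_nonneg _)
        have h5 : NA ^ s * NA ^ (-s) = 1 := by
          rw [← Real.rpow_add hNA0]; simp
        calc ‖z‖ ^ (-s) = NA ^ s * (NA ^ (-s) * ‖z‖ ^ (-s)) := by
              rw [← mul_assoc, h5, one_mul]
        _ = NA ^ s * (NA * ‖z‖) ^ (-s) := by rw [h4]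
        _ ≤ NA ^ s * ‖w‖ ^ (-s) := by
              apply mul_le_mul_of_nonneg_left h3 (Real.rpow_nonneg hNA0.le _)
      have hw2 : 0 ≤ ‖w‖ ^ (-s) := Real.rpow_nonneg (norm_nonneg _) _
      calc (1 - χ ‖z‖) * ‖z‖ ^ (-s) ≤ ‖z‖ ^ (-s) := hLHS
      _ ≤ NA ^ s * ‖w‖ ^ (-s) := hmid
      _ = 1 * (NA ^ s * ‖w‖ ^ (-s)) := (one_mul _).symm
      _ ≤ (|(σ₀ x).det| * ND) * (NA ^ s * ‖w‖ ^ (-s)) := by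
          apply mul_le_mul_of_nonneg_right (hdet_lb x)
          positivity
      _ = |(σ₀ x).det| * (CK * ‖w‖ ^ (-s)) := by rw [hCK_def]; ring
    · -- small z : kernel vanishes
      push_neg at hz
      have h1 : χ ‖z‖ = 1 := hχ1 _ ⟨norm_nonneg _, hz⟩
      rw [hk_def]
      simp [h1]
  -- measurability of the basic pieces
  have hχm : Measurable χ := hχsmooth.continuous.measurable
  have hrpm : Measurable fun z : EuclideanSpace ℝ (Fin (d₁ + d₂)) => ‖z‖ ^ (-s) := measurable_norm.pow_const (-s)
  have hkm : Measurable k := by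
    rw [hk_def]
    exact ((measurable_const.sub (hχm.comp measurable_norm)).mul hrpm).ennreal_ofReal
  have hKtm : Measurable Kt := by
    rw [hKt_def]
    apply Measurable.const_mul
    apply Measurable.ite _ hrpm.ennreal_ofReal measurable_const
    exact measurableSet_le measurable_const measurable_norm
  have hσm : ∀ i j, Measurable fun x : EuclideanSpace ℝ (Fin (d₁ + d₂)) => σ x i j := by
    intro i j
    have h1 : (fun x : EuclideanSpace ℝ (Fin (d₁ + d₂)) => σ x i j) = fun x : EuclideanSpace ℝ (Fin (d₁ + d₂)) =>
        (Matrix.fromBlocks 0 0 0 (σ₀ x)).submatrix e e i j := by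
      funext x; rw [hσ x]
    rw [h1]
    simp only [Matrix.submatrix_apply]
    rcases e i with i' | i' <;> rcases e j with j' | j'
    · simp [Matrix.fromBlocks_apply₁₁, Matrix.one_apply]
    · simp [Matrix.fromBlocks_apply₁₂]
    · simp [Matrix.fromBlocks_apply₂₁]
    · simp only [Matrix.fromBlocks_apply₂₂]
      exact ((hσ₀smooth i' j').continuous).measurable
  have hcoord : ∀ i : Fin (d₁ + d₂), Measurable fun v : EuclideanSpace ℝ (Fin (d₁ + d₂)) => v i := by
    intro i
    exact (measurable_pi_apply i).comp (MeasurableEquiv.toLp 2 (Fin (d₁+d₂) → ℝ)).symm.measurable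
  have hm1 : Measurable fun q : EuclideanSpace ℝ (Fin (d₁ + d₂)) × EuclideanSpace ℝ (Fin (d₁ + d₂)) => q.1 + Matrix.toEuclideanLin (σ q.1) q.2 := by
    have key : Measurable fun q : EuclideanSpace ℝ (Fin (d₁ + d₂)) × EuclideanSpace ℝ (Fin (d₁ + d₂)) =>
        (fun i => q.1 i + ∑ j, σ q.1 i j * q.2 j : Fin (d₁ + d₂) → ℝ) := by
      apply measurable_pi_iff.2
      intro i
      apply Measurable.add
      · exact (hcoord i).comp measurable_fst
      · exact Finset.measurable_sum _ fun j _ =>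
          ((hσm i j).comp measurable_fst).mul ((hcoord j).comp measurable_snd)
    exact (MeasurableEquiv.measurable
      (MeasurableEquiv.toLp 2 (Fin (d₁+d₂) → ℝ))).comp key
  have hm2 : Measurable fun q : EuclideanSpace ℝ (Fin (d₁ + d₂)) × EuclideanSpace ℝ (Fin (d₁ + d₂)) => q.1 + Matrix.toEuclideanLin P q.2 := by
    have hPc : Continuous (Matrix.toEuclideanLin P : EuclideanSpace ℝ (Fin (d₁ + d₂)) →ₗ[ℝ] EuclideanSpace ℝ (Fin (d₁ + d₂))) :=
      LinearMap.continuous_of_finiteDimensional _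
    exact (continuous_fst.add (hPc.comp continuous_snd)).measurable
  -- change of variables
  have hCoV : ∀ (x : EuclideanSpace ℝ (Fin (d₁ + d₂))) (h : EuclideanSpace ℝ (Fin (d₁ + d₂)) → ℝ≥0∞), Measurable h →
      ∫⁻ z, h (Matrix.toEuclideanLin (A x) z) =
        ENNReal.ofReal |((σ₀ x).det)⁻¹| * ∫⁻ w, h w := by
    intro x h hh
    have hdetA' : LinearMap.det (Matrix.toEuclideanLin (A x)) = (σ₀ x).det := by
      rw [Matrix.toEuclideanLin_eq_toLin, LinearMap.det_toLin, hdetA x]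
    have hmap := Measure.map_linearMap_addHaar_eq_smul_addHaar (volume : Measure (EuclideanSpace ℝ (Fin (d₁ + d₂))))
      (f := Matrix.toEuclideanLin (A x)) (by rw [hdetA']; exact hdet0 x)
    have hTm : Measurable (Matrix.toEuclideanLin (A x) : EuclideanSpace ℝ (Fin (d₁ + d₂)) →ₗ[ℝ] EuclideanSpace ℝ (Fin (d₁ + d₂))) :=
      (LinearMap.continuous_of_finiteDimensional _).measurable
    rw [← lintegral_map hh hTm, hmap, lintegral_smul_measure, hdetA', smul_eq_mul]
  -- now fix f
  set C : ℝ := (Mt + M₀).toReal + 1 with hC_def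
  have hC0 : 0 < C := by
    rw [hC_def]
    positivity
  have hCge : Mt + M₀ ≤ ENNReal.ofReal C := by
    rw [hC_def]
    calc Mt + M₀ = ENNReal.ofReal ((Mt + M₀).toReal) := by
          rw [ENNReal.ofReal_toReal (by
            exact (ENNReal.add_lt_top.2 ⟨hMttop, hM₀top⟩).ne)]
    _ ≤ ENNReal.ofReal ((Mt + M₀).toReal + 1) := ENNReal.ofReal_le_ofReal (by linarith)
  refine ⟨C, hC0, fun f hf hfc => ?_⟩
  have hfcont : Continuous f := hf.continuous
  have hfmem : MemLp f p volume := hfcont.memLp_of_hasCompactSupport hfc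
  set If : ℝ≥0∞ := ∫⁻ x, (‖f x‖₊ : ℝ≥0∞) ^ pr with hIf_def
  have heLp : eLpNorm f p volume = If ^ (1/pr) := by
    simp only [eLpNorm_eq_lintegral_rpow_enorm_toReal hp0 hptop, hIf_def, hpr_def, enorm_eq_nnnorm]
  have hIftop : If ≠ ⊤ := by
    intro h
    have h2 := hfmem.eLpNorm_lt_top
    rw [heLp, h] at h2
    have h3 : (⊤ : ℝ≥0∞) ^ (1/pr) = ⊤ := ENNReal.top_rpow_of_pos (by positivity)
    rw [h3] at h2
    exact absurd h2 (lt_irrefl _)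
  -- functions
  set G : EuclideanSpace ℝ (Fin (d₁ + d₂)) → ℝ≥0∞ := fun x => ∫⁻ z,
    (‖f (x + Matrix.toEuclideanLin (σ x) z)‖₊ : ℝ≥0∞) * k z with hG_def
  set H : EuclideanSpace ℝ (Fin (d₁ + d₂)) → ℝ≥0∞ := fun x => ∫⁻ w,
    (‖f (x + Matrix.toEuclideanLin P w)‖₊ : ℝ≥0∞) * Kt w with hH_def
  set J : EuclideanSpace ℝ (Fin (d₁ + d₂)) → ℝ≥0∞ := fun x => ∫⁻ w,
    (‖f (x + Matrix.toEuclideanLin P w)‖₊ : ℝ≥0∞) ^ pr * Kt w with hJ_def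
  -- measurability
  have hfm : Measurable f := hfcont.measurable
  have hΦ : Measurable fun q : EuclideanSpace ℝ (Fin (d₁ + d₂)) × EuclideanSpace ℝ (Fin (d₁ + d₂)) =>
      (‖f (q.1 + Matrix.toEuclideanLin (σ q.1) q.2)‖₊ : ℝ≥0∞) * k q.2 :=
    ((hfm.comp hm1).nnnorm.coe_nnreal_ennreal).mul (hkm.comp measurable_snd)
  have hΨ : Measurable fun q : EuclideanSpace ℝ (Fin (d₁ + d₂)) × EuclideanSpace ℝ (Fin (d₁ + d₂)) =>
      (‖f (q.1 + Matrix.toEuclideanLin P q.2)‖₊ : ℝ≥0∞) * Kt q.2 :=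
    ((hfm.comp hm2).nnnorm.coe_nnreal_ennreal).mul (hKtm.comp measurable_snd)
  have hΨp : Measurable fun q : EuclideanSpace ℝ (Fin (d₁ + d₂)) × EuclideanSpace ℝ (Fin (d₁ + d₂)) =>
      (‖f (q.1 + Matrix.toEuclideanLin P q.2)‖₊ : ℝ≥0∞) ^ pr * Kt q.2 :=
    (((hfm.comp hm2).nnnorm.coe_nnreal_ennreal).pow_const pr).mul (hKtm.comp measurable_snd)
  have hGm : Measurable G := by
    rw [hG_def]; exact hΦ.lintegral_prod_right'
  have hJm : Measurable J := by
    rw [hJ_def]; exact hΨp.lintegral_prod_right'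
  -- step 1 : G ≤ H
  have hGH : ∀ x, G x ≤ H x := by
    intro x
    have hhm : Measurable fun w : EuclideanSpace ℝ (Fin (d₁ + d₂)) =>
        (‖f (x + Matrix.toEuclideanLin P w)‖₊ : ℝ≥0∞) * Kt w :=
      hΨ.comp (measurable_const.prodMk measurable_id)
    have step1 : G x ≤ ∫⁻ z, ENNReal.ofReal |(σ₀ x).det| *
        ((‖f (x + Matrix.toEuclideanLin P (Matrix.toEuclideanLin (A x) z))‖₊ : ℝ≥0∞) *
          Kt (Matrix.toEuclideanLin (A x) z)) := by
      rw [hG_def]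
      apply lintegral_mono
      intro z
      beta_reduce
      have hfeq : x + Matrix.toEuclideanLin (σ x) z =
          x + Matrix.toEuclideanLin P (Matrix.toEuclideanLin (A x) z) := by
        rw [hPA x, aux_toEuclideanLin_mul]
      rw [hfeq]
      calc (‖f (x + Matrix.toEuclideanLin P (Matrix.toEuclideanLin (A x) z))‖₊ : ℝ≥0∞) * k z
          ≤ (‖f (x + Matrix.toEuclideanLin P (Matrix.toEuclideanLin (A x) z))‖₊ : ℝ≥0∞) *
            (ENNReal.ofReal |(σ₀ x).det| * Kt (Matrix.toEuclideanLin (A x) z)) :=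
          mul_le_mul_right (hker x z) _
      _ = ENNReal.ofReal |(σ₀ x).det| *
          ((‖f (x + Matrix.toEuclideanLin P (Matrix.toEuclideanLin (A x) z))‖₊ : ℝ≥0∞) *
            Kt (Matrix.toEuclideanLin (A x) z)) := mul_left_comm _ _ _
    have step2 : (∫⁻ z, ENNReal.ofReal |(σ₀ x).det| *
        ((‖f (x + Matrix.toEuclideanLin P (Matrix.toEuclideanLin (A x) z))‖₊ : ℝ≥0∞) *
          Kt (Matrix.toEuclideanLin (A x) z))) = H x := by
      rw [lintegral_const_mul' _ _ ENNReal.ofReal_ne_top]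
      rw [hCoV x _ hhm]
      rw [← mul_assoc, ← ENNReal.ofReal_mul (abs_nonneg _)]
      rw [abs_inv, mul_inv_cancel₀ (abs_ne_zero.2 (hdet0 x))]
      simp [hH_def]
    calc G x ≤ _ := step1
    _ = H x := step2
  -- step 2 : pointwise bound on L f
  haveI hnonemp : Nonempty (Fin (d₁ + d₂)) := ⟨⟨0, hd⟩⟩
  haveI hnontriv : Nontrivial (EuclideanSpace ℝ (Fin (d₁ + d₂))) := by
    refine ⟨⟨0, EuclideanSpace.single ⟨0, hd⟩ (1:ℝ), fun h => ?_⟩⟩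
    have h2 := congrArg (fun v : EuclideanSpace ℝ (Fin (d₁ + d₂)) => v ⟨0, hd⟩) h
    simp only [EuclideanSpace.single_apply] at h2
    simp at h2
  have hrestrict : (volume : Measure (EuclideanSpace ℝ (Fin (d₁ + d₂)))).restrict ({0}ᶜ : Set (EuclideanSpace ℝ (Fin (d₁ + d₂)))) = volume := by
    rw [Measure.restrict_congr_set (t := univ), Measure.restrict_univ]
    rw [ae_eq_univ]
    simp only [compl_compl]
    exact measure_singleton 0
  have hpt : ∀ x, (‖L f x‖₊ : ℝ≥0∞) ≤ G x + (‖f x‖₊ : ℝ≥0∞) * M₀ := by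
    intro x
    have h1 : L f x = ∫ z, (f (x + Matrix.toEuclideanLin (σ x) z) - f x) *
        ((1 - χ ‖z‖) * ‖z‖ ^ (-s)) := by
      rw [hL f x, hrestrict]
    rw [h1]
    calc (‖∫ z, (f (x + Matrix.toEuclideanLin (σ x) z) - f x) *
          ((1 - χ ‖z‖) * ‖z‖ ^ (-s))‖₊ : ℝ≥0∞)
        ≤ ∫⁻ z, (‖(f (x + Matrix.toEuclideanLin (σ x) z) - f x) *
          ((1 - χ ‖z‖) * ‖z‖ ^ (-s))‖₊ : ℝ≥0∞) := enorm_integral_le_lintegral_enorm _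
    _ = ∫⁻ z, (‖f (x + Matrix.toEuclideanLin (σ x) z) - f x‖₊ : ℝ≥0∞) * k z := by
        apply lintegral_congr
        intro z
        rw [nnnorm_mul, ENNReal.coe_mul]
        congr 1
        rw [hk_def]
        exact Real.enorm_eq_ofReal (by
          have := (hχrange ‖z‖).2
          have h2 : 0 ≤ ‖z‖ ^ (-s) := Real.rpow_nonneg (norm_nonneg _) _
          have h3 : 0 ≤ 1 - χ ‖z‖ := by linarith
          positivity)
    _ ≤ ∫⁻ z, ((‖f (x + Matrix.toEuclideanLin (σ x) z)‖₊ : ℝ≥0∞) +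
          (‖f x‖₊ : ℝ≥0∞)) * k z := by
        apply lintegral_mono
        intro z
        apply mul_le_mul_left
        calc (‖f (x + Matrix.toEuclideanLin (σ x) z) - f x‖₊ : ℝ≥0∞)
            ≤ ((‖f (x + Matrix.toEuclideanLin (σ x) z)‖₊ + ‖f x‖₊ : ℝ≥0) : ℝ≥0∞) := by
              exact_mod_cast nnnorm_sub_le _ _
        _ = _ := by rw [ENNReal.coe_add]
    _ = (∫⁻ z, (‖f (x + Matrix.toEuclideanLin (σ x) z)‖₊ : ℝ≥0∞) * k z) +
          ∫⁻ z, (‖f x‖₊ : ℝ≥0∞) * k z := by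
        simp_rw [add_mul]
        apply lintegral_add_left
        exact hΦ.comp (measurable_const.prodMk measurable_id)
    _ ≤ G x + (‖f x‖₊ : ℝ≥0∞) * M₀ := by
        apply add_le_add le_rfl
        rw [lintegral_const_mul' _ _ ENNReal.coe_ne_top]
        apply mul_le_mul_right
        rw [hM₀_def]
        exact lintegral_mono hkKb
  -- step 3 : Hölder for H
  have hHolder : ∀ x, H x ≤ (J x) ^ (1/pr) * Mt ^ (1/qr) := by
    intro x
    have hf1m : Measurable fun w : EuclideanSpace ℝ (Fin (d₁ + d₂)) =>
        (‖f (x + Matrix.toEuclideanLin P w)‖₊ : ℝ≥0∞) * Kt w ^ (1/pr) := by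
      exact ((hfm.comp (hm2.comp (measurable_const.prodMk measurable_id)))
        |>.nnnorm.coe_nnreal_ennreal).mul (hKtm.pow_const _)
    have hf2m : Measurable fun w : EuclideanSpace ℝ (Fin (d₁ + d₂)) => Kt w ^ (1/qr) := hKtm.pow_const _
    have h := ENNReal.lintegral_mul_le_Lp_mul_Lq (volume : Measure (EuclideanSpace ℝ (Fin (d₁ + d₂)))) hpq
      hf1m.aemeasurable hf2m.aemeasurable
    have hKtne : ∀ w : EuclideanSpace ℝ (Fin (d₁ + d₂)), Kt w ≠ ⊤ := by
      intro w
      rw [hKt_def]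
      simp only []
      refine ENNReal.mul_ne_top ENNReal.ofReal_ne_top ?_
      split_ifs
      · exact ENNReal.ofReal_ne_top
      · exact ENNReal.zero_ne_top
    have heq1 : ∀ w : EuclideanSpace ℝ (Fin (d₁ + d₂)), ((‖f (x + Matrix.toEuclideanLin P w)‖₊ : ℝ≥0∞) * Kt w ^ (1/pr)) *
        (Kt w ^ (1/qr)) = (‖f (x + Matrix.toEuclideanLin P w)‖₊ : ℝ≥0∞) * Kt w := by
      intro w
      rw [mul_assoc]
      congr 1
      rw [← aux_rpow_add (Kt w) (by positivity) (by positivity), hsum, ENNReal.rpow_one]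
    have h1pr : (0:ℝ) < 1/pr := div_pos one_pos hpr0
    have h1qr : (0:ℝ) < 1/qr := div_pos one_pos hqr0
    have heqf1p : ∀ w : EuclideanSpace ℝ (Fin (d₁ + d₂)),
        ((‖f (x + Matrix.toEuclideanLin P w)‖₊ : ℝ≥0∞) * Kt w ^ (1/pr)) ^ pr
          = (‖f (x + Matrix.toEuclideanLin P w)‖₊ : ℝ≥0∞) ^ pr * Kt w := by
      intro w
      rw [ENNReal.mul_rpow_of_nonneg _ _ hpr0.le, ← ENNReal.rpow_mul,
        one_div, inv_mul_cancel₀ hpr0.ne', ENNReal.rpow_one]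
    have heqf2q : ∀ w : EuclideanSpace ℝ (Fin (d₁ + d₂)),
        (Kt w ^ (1/qr)) ^ qr = Kt w := by
      intro w
      rw [← ENNReal.rpow_mul, one_div, inv_mul_cancel₀ hqr0.ne', ENNReal.rpow_one]
    calc H x = ∫⁻ w, ((fun w : EuclideanSpace ℝ (Fin (d₁ + d₂)) =>
          (‖f (x + Matrix.toEuclideanLin P w)‖₊ : ℝ≥0∞) * Kt w ^ (1/pr)) *
          (fun w : EuclideanSpace ℝ (Fin (d₁ + d₂)) => Kt w ^ (1/qr))) w := by
          rw [hH_def]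
          exact lintegral_congr fun w => (heq1 w).symm
    _ ≤ (∫⁻ w, ((‖f (x + Matrix.toEuclideanLin P w)‖₊ : ℝ≥0∞) * Kt w ^ (1/pr)) ^ pr) ^ (1/pr) *
        (∫⁻ w, (Kt w ^ (1/qr)) ^ qr) ^ (1/qr) := h
    _ = (J x) ^ (1/pr) * Mt ^ (1/qr) := by
        congr 1
        · congr 1
          rw [hJ_def]
          exact lintegral_congr heqf1p
        · congr 1
          rw [hMt_def]
          exact lintegral_congr heqf2q
  have h1pr : (0:ℝ) < 1/pr := div_pos one_pos hpr0
  have h1qr : (0:ℝ) < 1/qr := div_pos one_pos hqr0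
  -- step 4 : integral of J
  have hJint : (∫⁻ x, J x) = If * Mt := by
    rw [hJ_def]
    beta_reduce
    rw [lintegral_lintegral_swap hΨp.aemeasurable]
    have hinner : ∀ w : EuclideanSpace ℝ (Fin (d₁ + d₂)),
        (∫⁻ x, (‖f (x + Matrix.toEuclideanLin P w)‖₊ : ℝ≥0∞) ^ pr * Kt w) = If * Kt w := by
      intro w
      rw [lintegral_mul_const' (Kt w) _ (by
        rw [hKt_def]
        beta_reduce
        refine ENNReal.mul_ne_top ENNReal.ofReal_ne_top ?_
        split_ifs
        · exact ENNReal.ofReal_ne_top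
        · exact ENNReal.zero_ne_top)]
      congr 1
      rw [hIf_def]
      exact lintegral_add_right_eq_self (fun y => (‖f y‖₊ : ℝ≥0∞) ^ pr) _
    rw [lintegral_congr hinner, lintegral_const_mul' If _ hIftop, ← hMt_def]
  -- step 5 : bound for the G-term
  have hGbound : (∫⁻ x, G x ^ pr) ^ (1/pr) ≤ Mt * If ^ (1/pr) := by
    have h1 : ∀ x, G x ^ pr ≤ (J x) * Mt ^ ((1/qr) * pr) := by
      intro x
      calc G x ^ pr ≤ ((J x) ^ (1/pr) * Mt ^ (1/qr)) ^ pr :=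
        ENNReal.rpow_le_rpow (le_trans (hGH x) (hHolder x)) hpr0.le
      _ = ((J x) ^ (1/pr)) ^ pr * (Mt ^ (1/qr)) ^ pr := ENNReal.mul_rpow_of_nonneg _ _ hpr0.le
      _ = J x * Mt ^ ((1/qr) * pr) := by
          rw [← ENNReal.rpow_mul, ← ENNReal.rpow_mul, one_div, inv_mul_cancel₀ hpr0.ne',
            ENNReal.rpow_one]
    calc (∫⁻ x, G x ^ pr) ^ (1/pr) ≤ (∫⁻ x, J x * Mt ^ ((1/qr) * pr)) ^ (1/pr) :=
        ENNReal.rpow_le_rpow (lintegral_mono h1) h1pr.le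
    _ = ((If * Mt) * Mt ^ ((1/qr) * pr)) ^ (1/pr) := by
        rw [lintegral_mul_const' _ _ (ENNReal.rpow_ne_top_of_nonneg
          (by positivity) hMttop.ne), hJint]
    _ = (If ^ (1/pr) * Mt ^ (1/pr)) * Mt ^ (1/qr) := by
        rw [ENNReal.mul_rpow_of_nonneg _ _ h1pr.le, ENNReal.mul_rpow_of_nonneg _ _ h1pr.le,
          ← ENNReal.rpow_mul]
        have hexp : ((1/qr) * pr) * (1/pr) = 1/qr := by
          rw [mul_assoc, mul_one_div, div_self hpr0.ne', mul_one]
        rw [hexp]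
    _ = Mt * If ^ (1/pr) := by
        rw [mul_assoc, ← aux_rpow_add Mt h1pr h1qr, hsum, ENNReal.rpow_one, mul_comm]
  -- step 6 : bound for the M₀-term
  have hM0bound : (∫⁻ x, ((‖f x‖₊ : ℝ≥0∞) * M₀) ^ pr) ^ (1/pr) ≤ M₀ * If ^ (1/pr) := by
    have h1 : (∫⁻ x, ((‖f x‖₊ : ℝ≥0∞) * M₀) ^ pr) = If * M₀ ^ pr := by
      calc (∫⁻ x, ((‖f x‖₊ : ℝ≥0∞) * M₀) ^ pr)
          = ∫⁻ x, (‖f x‖₊ : ℝ≥0∞) ^ pr * M₀ ^ pr :=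
          lintegral_congr fun x => ENNReal.mul_rpow_of_nonneg _ _ hpr0.le
      _ = If * M₀ ^ pr := by
          rw [lintegral_mul_const' _ _ (ENNReal.rpow_ne_top_of_nonneg hpr0.le hM₀top.ne),
            ← hIf_def]
    rw [h1, ENNReal.mul_rpow_of_nonneg _ _ h1pr.le, ← ENNReal.rpow_mul,
      mul_one_div, div_self hpr0.ne', ENNReal.rpow_one, mul_comm]
  -- final estimate
  have hbound : eLpNorm (L f) p volume ≤ ENNReal.ofReal C * eLpNorm f p volume := by
    have hmain : eLpNorm (L f) p volume ≤ (Mt + M₀) * eLpNorm f p volume := by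
      rw [eLpNorm_eq_lintegral_rpow_enorm_toReal hp0 hptop, heLp, ← hpr_def]
      calc (∫⁻ x, (‖L f x‖₊ : ℝ≥0∞) ^ pr) ^ (1/pr)
          ≤ (∫⁻ x, (G x + (‖f x‖₊ : ℝ≥0∞) * M₀) ^ pr) ^ (1/pr) :=
          ENNReal.rpow_le_rpow
            (lintegral_mono fun x => ENNReal.rpow_le_rpow (hpt x) hpr0.le) h1pr.le
      _ ≤ (∫⁻ x, G x ^ pr) ^ (1/pr) + (∫⁻ x, ((‖f x‖₊ : ℝ≥0∞) * M₀) ^ pr) ^ (1/pr) :=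
          ENNReal.lintegral_Lp_add_le hGm.aemeasurable
            ((hfm.nnnorm.coe_nnreal_ennreal.mul_const M₀)).aemeasurable hpr1.le
      _ ≤ Mt * If ^ (1/pr) + M₀ * If ^ (1/pr) := add_le_add hGbound hM0bound
      _ = (Mt + M₀) * If ^ (1/pr) := (add_mul _ _ _).symm
    exact le_trans hmain (mul_le_mul_left hCge _)
  -- strong measurability of L f
  have hLf_eq : L f = fun x => ∫ z, (f (x + Matrix.toEuclideanLin (σ x) z) - f x) *
      ((1 - χ ‖z‖) * ‖z‖ ^ (-s)) := by
    funext x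
    rw [hL f x, hrestrict]
  have haesm : AEStronglyMeasurable (L f) volume := by
    rw [hLf_eq]
    have hFm : StronglyMeasurable fun q : EuclideanSpace ℝ (Fin (d₁ + d₂)) ×
        EuclideanSpace ℝ (Fin (d₁ + d₂)) =>
        (f (q.1 + Matrix.toEuclideanLin (σ q.1) q.2) - f q.1) *
          ((1 - χ ‖q.2‖) * ‖q.2‖ ^ (-s)) := by
      apply Measurable.stronglyMeasurable
      exact ((hfm.comp hm1).sub (hfm.comp measurable_fst)).mul
        ((measurable_const.sub (hχm.comp (measurable_norm.comp measurable_snd))).mul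
          (hrpm.comp measurable_snd))
    exact (hFm.integral_prod_right').aestronglyMeasurable
  refine ⟨⟨haesm, ?_⟩, hbound⟩
  exact lt_of_le_of_lt hbound
    (ENNReal.mul_lt_top ENNReal.ofReal_lt_top hfmem.eLpNorm_lt_top)
end

section
/- Let α ∈ (0,2) and let ν be a Borel measure on ℝ^d∖{0} with ∫_{|z|≤1}|z|² ν(dz) < ∞ and such that lim_{ε↓0} ε^{α−2} ∫_{|z|≤ε}|z|² ν(dz) = c₁ for some constant c₁ > 0. Then for every p ≥ 2 there exist constants 0 < c₀ ≤ C₀ such that c₀ ε^{p−α} ≤ ∫_{|z|≤ε}|z|^p ν(dz) ≤ C₀ ε^{p−α} for all ε ∈ (0,1). -/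
open MeasureTheory Set Filter

private lemma aux_rpow_le {a ε p : ℝ} (ha : 0 ≤ a) (haε : a ≤ ε) (hp : 2 ≤ p) :
    a ^ p ≤ ε ^ (p - 2) * a ^ (2:ℝ) := by
  rcases ha.eq_or_lt with h | h
  · rw [← h, Real.zero_rpow (by linarith : p ≠ 0),
      Real.zero_rpow (by norm_num : (2:ℝ) ≠ 0), mul_zero]
  · have h1 : a ^ p = a ^ (p - 2) * a ^ (2:ℝ) := by
      rw [← Real.rpow_add h]; ring_nf
    rw [h1]
    exact mul_le_mul_of_nonneg_right (Real.rpow_le_rpow h.le haε (by linarith))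
      (Real.rpow_nonneg h.le 2)

private lemma aux_rpow_ge {a ε p : ℝ} (hε : 0 < ε) (haε : ε ≤ a) (hp : 2 ≤ p) :
    ε ^ (p - 2) * a ^ (2:ℝ) ≤ a ^ p := by
  have ha : 0 < a := lt_of_lt_of_le hε haε
  have h1 : a ^ p = a ^ (p - 2) * a ^ (2:ℝ) := by
    rw [← Real.rpow_add ha]; ring_nf
  rw [h1]
  exact mul_le_mul_of_nonneg_right (Real.rpow_le_rpow hε.le haε (by linarith))
    (Real.rpow_nonneg ha.le 2)

/-- Let `α ∈ (0,2)` and let `ν` be a Borel measure on `ℝ^d ∖ {0}` with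
`∫_{|z|≤1} |z|² ν(dz) < ∞` and `lim_{ε↓0} ε^(α-2) ∫_{|z|≤ε} |z|² ν(dz) = c₁ > 0`.
Then for every `p ≥ 2` there are constants `0 < c₀ ≤ C₀` with
`c₀ ε^(p-α) ≤ ∫_{|z|≤ε} |z|^p ν(dz) ≤ C₀ ε^(p-α)` for all `ε ∈ (0,1)`. -/
theorem stmt_2 {d : ℕ} (α c₁ : ℝ) (hα : α ∈ Ioo (0:ℝ) 2) (hc₁ : 0 < c₁)
    (ν : Measure (EuclideanSpace ℝ (Fin d)))
    (hν0 : ν {0} = 0)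
    (hint : IntegrableOn (fun z => ‖z‖ ^ (2:ℝ)) {z | ‖z‖ ≤ 1} ν)
    (hlim : Tendsto (fun ε : ℝ => ε ^ (α - 2) * ∫ z in {z | ‖z‖ ≤ ε}, ‖z‖ ^ (2:ℝ) ∂ν)
      (nhdsWithin 0 (Ioi 0)) (nhds c₁)) :
    ∀ p : ℝ, 2 ≤ p → ∃ c₀ C₀ : ℝ, 0 < c₀ ∧ c₀ ≤ C₀ ∧ ∀ ε ∈ Ioo (0:ℝ) 1,
      c₀ * ε ^ (p - α) ≤ ∫ z in {z | ‖z‖ ≤ ε}, ‖z‖ ^ p ∂ν ∧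
      ∫ z in {z | ‖z‖ ≤ ε}, ‖z‖ ^ p ∂ν ≤ C₀ * ε ^ (p - α) := by
  intro p hp
  obtain ⟨hα0, hα2⟩ := hα
  set F : ℝ → ℝ := fun r => ∫ z in {z : EuclideanSpace ℝ (Fin d) | ‖z‖ ≤ r}, ‖z‖ ^ (2:ℝ) ∂ν
    with hF
  set G : ℝ → ℝ := fun r => ∫ z in {z : EuclideanSpace ℝ (Fin d) | ‖z‖ ≤ r}, ‖z‖ ^ p ∂ν
    with hG
  -- basic facts
  have measB : ∀ r : ℝ, MeasurableSet {z : EuclideanSpace ℝ (Fin d) | ‖z‖ ≤ r} :=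
    fun r => measurableSet_le measurable_norm measurable_const
  have Bmono : ∀ {r s : ℝ}, r ≤ s →
      {z : EuclideanSpace ℝ (Fin d) | ‖z‖ ≤ r} ⊆ {z | ‖z‖ ≤ s} :=
    fun h z hz => le_trans hz h
  have int2 : ∀ {r : ℝ}, r ≤ 1 →
      IntegrableOn (fun z : EuclideanSpace ℝ (Fin d) => ‖z‖ ^ (2:ℝ))
        {z | ‖z‖ ≤ r} ν := fun h => hint.mono_set (Bmono h)
  have contP : Continuous fun z : EuclideanSpace ℝ (Fin d) => ‖z‖ ^ p :=
    continuous_norm.rpow_const fun z => Or.inr (by linarith)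
  have nonnegP : ∀ z : EuclideanSpace ℝ (Fin d), 0 ≤ ‖z‖ ^ p :=
    fun z => Real.rpow_nonneg (norm_nonneg z) p
  have nonneg2 : ∀ z : EuclideanSpace ℝ (Fin d), 0 ≤ ‖z‖ ^ (2:ℝ) :=
    fun z => Real.rpow_nonneg (norm_nonneg z) 2
  have intP : ∀ {r : ℝ}, 0 < r → r ≤ 1 →
      IntegrableOn (fun z : EuclideanSpace ℝ (Fin d) => ‖z‖ ^ p) {z | ‖z‖ ≤ r} ν := by
    intro r hr hr1
    refine Integrable.mono ((int2 hr1).const_mul (r ^ (p - 2)))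
      contP.aestronglyMeasurable.restrict ?_
    rw [ae_restrict_iff' (measB r)]
    filter_upwards with z hz
    have h1 : ‖z‖ ^ p ≤ r ^ (p - 2) * ‖z‖ ^ (2:ℝ) := aux_rpow_le (norm_nonneg z) hz hp
    rw [Real.norm_eq_abs, Real.norm_eq_abs, abs_of_nonneg (nonnegP z)]
    exact h1.trans (le_abs_self _)
  have Gmono : ∀ {r s : ℝ}, 0 < r → r ≤ s → s ≤ 1 → G r ≤ G s := by
    intro r s hr hrs hs1
    exact setIntegral_mono_set (intP (hr.trans_le hrs) hs1)
      (Eventually.of_forall fun z => nonnegP z) (HasSubset.Subset.eventuallyLE (Bmono hrs))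
  -- upper bound G r ≤ r^(p-2) * F r
  have hFub : ∀ {r : ℝ}, 0 < r → r ≤ 1 → G r ≤ r ^ (p - 2) * F r := by
    intro r hr hr1
    have h1 : G r ≤ ∫ z in {z : EuclideanSpace ℝ (Fin d) | ‖z‖ ≤ r},
        r ^ (p - 2) * ‖z‖ ^ (2:ℝ) ∂ν := by
      refine setIntegral_mono_on (intP hr hr1) ((int2 hr1).const_mul _) (measB r) ?_
      intro z hz
      exact aux_rpow_le (norm_nonneg z) hz hp
    rwa [integral_const_mul _ _] at h1
  -- constants from the limit
  set s2 : ℝ := (2:ℝ) ^ (α - 2) with hs2def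
  have hs2pos : 0 < s2 := Real.rpow_pos_of_pos (by norm_num) _
  have hs2lt : s2 < 1 := Real.rpow_lt_one_of_one_lt_of_neg (by norm_num) (by linarith)
  set η : ℝ := c₁ * (1 - s2) / 3 with hηdef
  have hη : 0 < η := by
    apply div_pos (mul_pos hc₁ (by linarith)) (by norm_num)
  obtain ⟨δ₀, hδ₀, hδP⟩ := Metric.tendsto_nhdsWithin_nhds.mp hlim η hη
  set δ : ℝ := min (δ₀ / 2) 1 with hδdef
  have hδpos : 0 < δ := lt_min (by linarith) one_pos
  have hδ1 : δ ≤ 1 := min_le_right _ _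
  have hclose : ∀ {ε : ℝ}, 0 < ε → ε ≤ δ → |ε ^ (α - 2) * F ε - c₁| < η := by
    intro ε hε hεδ
    have h1 : dist ε 0 < δ₀ := by
      rw [Real.dist_eq, sub_zero, abs_of_pos hε]
      calc ε ≤ δ := hεδ
        _ ≤ δ₀ / 2 := min_le_left _ _
        _ < δ₀ := by linarith
    have := hδP (mem_Ioi.mpr hε) h1
    rwa [Real.dist_eq] at this
  have hpow1 : ∀ {ε : ℝ}, 0 < ε → ε ^ (2 - α) * ε ^ (α - 2) = 1 := by
    intro ε hε
    rw [← Real.rpow_add hε]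
    norm_num
  have hFl : ∀ {ε : ℝ}, 0 < ε → ε ≤ δ → (c₁ - η) * ε ^ (2 - α) ≤ F ε := by
    intro ε hε hεδ
    have h1 := (abs_lt.mp (hclose hε hεδ)).1
    have h2 : c₁ - η ≤ ε ^ (α - 2) * F ε := by linarith
    have h3 := mul_le_mul_of_nonneg_left h2 (Real.rpow_nonneg hε.le (2 - α))
    calc (c₁ - η) * ε ^ (2 - α) = ε ^ (2 - α) * (c₁ - η) := by ring
      _ ≤ ε ^ (2 - α) * (ε ^ (α - 2) * F ε) := h3
      _ = (ε ^ (2 - α) * ε ^ (α - 2)) * F ε := by ring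
      _ = F ε := by rw [hpow1 hε, one_mul]
  have hFu : ∀ {ε : ℝ}, 0 < ε → ε ≤ δ → F ε ≤ (c₁ + η) * ε ^ (2 - α) := by
    intro ε hε hεδ
    have h1 := (abs_lt.mp (hclose hε hεδ)).2
    have h2 : ε ^ (α - 2) * F ε ≤ c₁ + η := by linarith
    have h3 := mul_le_mul_of_nonneg_left h2 (Real.rpow_nonneg hε.le (2 - α))
    calc F ε = (ε ^ (2 - α) * ε ^ (α - 2)) * F ε := by rw [hpow1 hε, one_mul]
      _ = ε ^ (2 - α) * (ε ^ (α - 2) * F ε) := by ring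
      _ ≤ ε ^ (2 - α) * (c₁ + η) := h3
      _ = (c₁ + η) * ε ^ (2 - α) := by ring
  -- lower bound for small ε via the annulus
  have klow : ∀ {ε : ℝ}, 0 < ε → ε ≤ δ → η * 2 ^ (2 - p) * ε ^ (p - α) ≤ G ε := by
    intro ε hε hεδ
    have hε1 : ε ≤ 1 := hεδ.trans hδ1
    have hε2 : 0 < ε / 2 := by linarith
    have hε2δ : ε / 2 ≤ δ := by linarith
    -- F(ε/2) ≤ (c₁+η) * s2 * ε^(2-α)
    have hhalf : ((ε : ℝ) / 2) ^ (2 - α) = s2 * ε ^ (2 - α) := by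
      rw [hs2def, Real.div_rpow hε.le (by norm_num : (0:ℝ) ≤ 2)]
      rw [div_eq_mul_inv, ← Real.rpow_neg (by norm_num : (0:ℝ) ≤ 2)]
      have : -(2 - α) = α - 2 := by ring
      rw [this]; ring
    have hF2 : F (ε / 2) ≤ (c₁ + η) * (s2 * ε ^ (2 - α)) := by
      have := hFu hε2 hε2δ
      rwa [hhalf] at this
    have hdiffF : η * ε ^ (2 - α) ≤ F ε - F (ε / 2) := by
      have h1 := hFl hε hεδ
      have hbr : η * ε ^ (2 - α) ≤ ((c₁ - η) - (c₁ + η) * s2) * ε ^ (2 - α) := by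
        apply mul_le_mul_of_nonneg_right _ (Real.rpow_nonneg hε.le _)
        rw [hηdef]; nlinarith [hs2pos, hs2lt, hc₁]
      have : ((c₁ - η) - (c₁ + η) * s2) * ε ^ (2 - α)
          = (c₁ - η) * ε ^ (2 - α) - (c₁ + η) * (s2 * ε ^ (2 - α)) := by ring
      linarith [hbr, h1, hF2, this.ge, this.le]
    -- the annulus
    set A : Set (EuclideanSpace ℝ (Fin d)) :=
      {z | ‖z‖ ≤ ε} \ {z | ‖z‖ ≤ ε / 2} with hA
    have hAsub : A ⊆ {z : EuclideanSpace ℝ (Fin d) | ‖z‖ ≤ ε} := diff_subset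
    have hAint2 : ∫ z in A, ‖z‖ ^ (2:ℝ) ∂ν = F ε - F (ε / 2) :=
      integral_diff (measB (ε / 2)) (int2 hε1) (Bmono (by linarith))
    have hAmeas : MeasurableSet A := (measB ε).diff (measB (ε / 2))
    have hAintP : IntegrableOn (fun z : EuclideanSpace ℝ (Fin d) => ‖z‖ ^ p) A ν :=
      (intP hε hε1).mono_set hAsub
    have hAint2' : IntegrableOn (fun z : EuclideanSpace ℝ (Fin d) => ‖z‖ ^ (2:ℝ)) A ν :=
      (int2 hε1).mono_set hAsub
    have hlow1 : (ε / 2) ^ (p - 2) * (F ε - F (ε / 2)) ≤ ∫ z in A, ‖z‖ ^ p ∂ν := by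
      rw [← hAint2, ← integral_const_mul _ _]
      refine setIntegral_mono_on (hAint2'.const_mul _) hAintP hAmeas ?_
      intro z hz
      have hz2 : ε / 2 ≤ ‖z‖ := le_of_lt (not_le.mp hz.2)
      exact aux_rpow_ge hε2 hz2 hp
    have hlow2 : ∫ z in A, ‖z‖ ^ p ∂ν ≤ G ε :=
      setIntegral_mono_set (intP hε hε1) (Eventually.of_forall fun z => nonnegP z)
        (HasSubset.Subset.eventuallyLE hAsub)
    have hlow3 : (ε / 2) ^ (p - 2) * (η * ε ^ (2 - α)) ≤ (ε / 2) ^ (p - 2) * (F ε - F (ε / 2)) :=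
      mul_le_mul_of_nonneg_left hdiffF (Real.rpow_nonneg hε2.le _)
    have halg : (ε / 2) ^ (p - 2) * (η * ε ^ (2 - α)) = η * 2 ^ (2 - p) * ε ^ (p - α) := by
      rw [Real.div_rpow hε.le (by norm_num : (0:ℝ) ≤ 2), div_eq_mul_inv,
        ← Real.rpow_neg (by norm_num : (0:ℝ) ≤ 2)]
      have h2 : -(p - 2) = 2 - p := by ring
      rw [h2]
      have h3 : ε ^ (p - 2) * ε ^ (2 - α) = ε ^ (p - α) := by
        rw [← Real.rpow_add hε]; ring_nf
      calc ε ^ (p - 2) * 2 ^ (2 - p) * (η * ε ^ (2 - α))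
          = η * 2 ^ (2 - p) * (ε ^ (p - 2) * ε ^ (2 - α)) := by ring
        _ = η * 2 ^ (2 - p) * ε ^ (p - α) := by rw [h3]
    linarith [hlow1, hlow2, hlow3, halg.le, halg.ge]
  -- assemble constants
  have hpα : 0 < p - α := by linarith
  have h2p : (0:ℝ) < 2 ^ (2 - p) := Real.rpow_pos_of_pos (by norm_num) _
  have hδpα : 0 < δ ^ (p - α) := Real.rpow_pos_of_pos hδpos _
  have hδpα1 : δ ^ (p - α) ≤ 1 := Real.rpow_le_one hδpos.le hδ1 hpα.le
  have hF1 : 0 ≤ F 1 := setIntegral_nonneg (measB 1) fun z _ => nonneg2 z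
  refine ⟨η * 2 ^ (2 - p) * δ ^ (p - α),
    η * 2 ^ (2 - p) * δ ^ (p - α) + (c₁ + η) + F 1 / δ ^ (p - α), ?_, ?_, ?_⟩
  · positivity
  · have : 0 ≤ F 1 / δ ^ (p - α) := div_nonneg hF1 hδpα.le
    linarith
  · rintro ε ⟨hε0, hε1⟩
    have hεpα : 0 < ε ^ (p - α) := Real.rpow_pos_of_pos hε0 _
    have hεpα1 : ε ^ (p - α) ≤ 1 := Real.rpow_le_one hε0.le hε1.le hpα.le
    constructor
    · -- lower bound
      rcases le_or_gt ε δ with h | h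
      · have h1 := klow hε0 h
        have h2 : η * 2 ^ (2 - p) * δ ^ (p - α) * ε ^ (p - α)
            ≤ η * 2 ^ (2 - p) * ε ^ (p - α) := by
          have := mul_le_mul_of_nonneg_left hδpα1 (by positivity : (0:ℝ) ≤ η * 2 ^ (2 - p))
          nlinarith [hεpα]
        exact h2.trans h1
      · have h1 : G δ ≤ G ε := Gmono hδpos h.le hε1.le
        have h2 := klow hδpos le_rfl
        have h3 : η * 2 ^ (2 - p) * δ ^ (p - α) * ε ^ (p - α)
            ≤ η * 2 ^ (2 - p) * δ ^ (p - α) := by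
          have hCpos : 0 < η * 2 ^ (2 - p) * δ ^ (p - α) := by positivity
          have := mul_le_mul_of_nonneg_left hεpα1 hCpos.le
          nlinarith
        exact h3.trans (h2.trans h1)
    · -- upper bound
      have hub := hFub hε0 hε1.le
      have hC0 : 0 ≤ η * 2 ^ (2 - p) * δ ^ (p - α) := by positivity
      rcases le_or_gt ε δ with h | h
      · have h1 : F ε ≤ (c₁ + η) * ε ^ (2 - α) := hFu hε0 h
        have h2 : G ε ≤ ε ^ (p - 2) * ((c₁ + η) * ε ^ (2 - α)) := by
          refine hub.trans (mul_le_mul_of_nonneg_left h1 (Real.rpow_nonneg hε0.le _))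
        have h3 : ε ^ (p - 2) * ((c₁ + η) * ε ^ (2 - α)) = (c₁ + η) * ε ^ (p - α) := by
          have : ε ^ (p - 2) * ε ^ (2 - α) = ε ^ (p - α) := by
            rw [← Real.rpow_add hε0]; ring_nf
          calc ε ^ (p - 2) * ((c₁ + η) * ε ^ (2 - α))
              = (c₁ + η) * (ε ^ (p - 2) * ε ^ (2 - α)) := by ring
            _ = (c₁ + η) * ε ^ (p - α) := by rw [this]
        have h4 : (c₁ + η) * ε ^ (p - α)
            ≤ (η * 2 ^ (2 - p) * δ ^ (p - α) + (c₁ + η) + F 1 / δ ^ (p - α)) * ε ^ (p - α) := by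
          apply mul_le_mul_of_nonneg_right _ hεpα.le
          have : 0 ≤ F 1 / δ ^ (p - α) := div_nonneg hF1 hδpα.le
          linarith
        rw [h3] at h2
        exact h2.trans h4
      · -- ε > δ : G ε ≤ F 1 ≤ (F 1 / δ^(p-α)) * ε^(p-α)
        have hF1b : F ε ≤ F 1 :=
          setIntegral_mono_set hint (Eventually.of_forall fun z => nonneg2 z)
            (HasSubset.Subset.eventuallyLE (Bmono hε1.le))
        have hεp2 : ε ^ (p - 2) ≤ 1 := Real.rpow_le_one hε0.le hε1.le (by linarith)
        have hFε : 0 ≤ F ε := setIntegral_nonneg (measB ε) fun z _ => nonneg2 z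
        have h2 : G ε ≤ F 1 := by
          calc G ε ≤ ε ^ (p - 2) * F ε := hub
            _ ≤ 1 * F 1 := mul_le_mul hεp2 hF1b hFε (by norm_num)
            _ = F 1 := one_mul _
        have h3 : δ ^ (p - α) ≤ ε ^ (p - α) := Real.rpow_le_rpow hδpos.le h.le hpα.le
        have h4 : F 1 ≤ F 1 / δ ^ (p - α) * ε ^ (p - α) := by
          calc F 1 = F 1 / δ ^ (p - α) * δ ^ (p - α) :=
                (div_mul_cancel₀ (F 1) hδpα.ne').symm
            _ ≤ F 1 / δ ^ (p - α) * ε ^ (p - α) :=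
                mul_le_mul_of_nonneg_left h3 (div_nonneg hF1 hδpα.le)
        have h6 : F 1 / δ ^ (p - α) * ε ^ (p - α)
            ≤ (η * 2 ^ (2 - p) * δ ^ (p - α) + (c₁ + η) + F 1 / δ ^ (p - α)) * ε ^ (p - α) := by
          apply mul_le_mul_of_nonneg_right _ hεpα.le
          linarith
        exact h2.trans (h4.trans h6)
end

section
/- Let (Ω, 𝓕, P) be a probability space and ξ : Ω → [0,∞) a random variable. Let t ∈ (0,1], θ > 0, c₁ ∈ (0,1), C ≥ 1 and p ≥ 1, and suppose that P(ξ ≤ ε) ≤ C e^{−c₁ t ε^{−θ}} + C ε^p for all ε ∈ (0,1). Then there exists a constant C' > 0, depending only on C and p, such that for all λ ≥ t: E[e^{−λξ}] ≤ e^{−t (λ/t)^{θ/(1+θ)}} + C e^{−c₁ t (λ/t)^{θ/(1+θ)}} + C' λ^{−p}. -/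
open MeasureTheory Set
open scoped ENNReal

lemma exp_integral_Ioi (l a : ℝ) (hl : 0 < l) :
    ∫ x in Ioi a, l * Real.exp (-(l * x)) = Real.exp (-(l * a)) := by
  have hderiv : ∀ x ∈ Ici a, HasDerivAt (fun x => -Real.exp (-(l * x)))
      (l * Real.exp (-(l * x))) x := by
    intro x _
    have h1 : HasDerivAt (fun x => -(l * x)) (-l) x := by
      simpa using ((hasDerivAt_id x).const_mul l).fun_neg
    have h2 := h1.exp
    exact h2.fun_neg.congr_deriv (by ring)
  have hint : IntegrableOn (fun x => l * Real.exp (-(l * x))) (Ioi a) := by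
    have := (exp_neg_integrableOn_Ioi a hl).const_mul l
    simpa [neg_mul, IntegrableOn] using this
  have htend : Filter.Tendsto (fun x => -Real.exp (-(l * x))) Filter.atTop (nhds 0) := by
    have h1 : Filter.Tendsto (fun x : ℝ => l * x) Filter.atTop Filter.atTop :=
      Filter.Tendsto.const_mul_atTop hl Filter.tendsto_id
    have h2 : Filter.Tendsto (fun x : ℝ => Real.exp (-(l * x))) Filter.atTop (nhds 0) :=
      Real.tendsto_exp_neg_atTop_nhds_zero.comp h1
    simpa using h2.neg
  have := integral_Ioi_of_hasDerivAt_of_tendsto' hderiv hint htend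
  simpa using this

lemma exp_lintegral_Ioi (l a : ℝ) (hl : 0 < l) :
    ∫⁻ x in Ioi a, ENNReal.ofReal (l * Real.exp (-(l * x)))
      = ENNReal.ofReal (Real.exp (-(l * a))) := by
  rw [← ofReal_integral_eq_lintegral_ofReal, exp_integral_Ioi l a hl]
  · have := (exp_neg_integrableOn_Ioi a hl).const_mul l
    simpa [neg_mul] using this
  · exact Filter.Eventually.of_forall fun x => by positivity

lemma key_swap {Ω : Type*} [MeasurableSpace Ω] (P : Measure Ω) [IsProbabilityMeasure P]
    (ξ : Ω → ℝ) (hξmeas : Measurable ξ) (hξpos : ∀ ω, 0 ≤ ξ ω) (l : ℝ) (hl : 0 < l) :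
    ∫⁻ ω, ENNReal.ofReal (Real.exp (-(l * ξ ω))) ∂P
      = ∫⁻ ε in Ioi (0:ℝ), ENNReal.ofReal (l * Real.exp (-(l * ε))) * P {ω | ξ ω ≤ ε} := by
  have hset : MeasurableSet {q : Ω × ℝ | ξ q.1 ≤ q.2} :=
    measurableSet_le (hξmeas.comp measurable_fst) measurable_snd
  set f : Ω → ℝ → ℝ≥0∞ := fun ω ε => ENNReal.ofReal (l * Real.exp (-(l * ε))) *
      {q : Ω × ℝ | ξ q.1 ≤ q.2}.indicator (fun _ => (1:ℝ≥0∞)) (ω, ε) with hf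
  have hmeas_unc : Measurable (Function.uncurry f) := by
    apply Measurable.mul
    · exact ENNReal.measurable_ofReal.comp <|
        (measurable_const.mul ((measurable_snd.const_mul l).neg.exp))
    · exact (measurable_const.indicator hset)
  -- step 1 : inner integral in ε equals exp (-(l ξ ω))
  have step1 : ∀ ω, ∫⁻ ε in Ioi (0:ℝ), f ω ε
      = ENNReal.ofReal (Real.exp (-(l * ξ ω))) := by
    intro ω
    have hind : ∀ ε : ℝ, f ω ε
        = (Ici (ξ ω)).indicator (fun ε => ENNReal.ofReal (l * Real.exp (-(l * ε)))) ε := by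
      intro ε
      by_cases h : ξ ω ≤ ε
      · simp [hf, h, Set.indicator_of_mem, Set.mem_Ici.mpr h, Set.mem_setOf_eq]
      · simp [hf, h, Set.indicator_of_notMem, Set.mem_setOf_eq]
    calc ∫⁻ ε in Ioi (0:ℝ), f ω ε
        = ∫⁻ ε in Ioi (0:ℝ),
            (Ici (ξ ω)).indicator (fun ε => ENNReal.ofReal (l * Real.exp (-(l * ε)))) ε := by
          exact lintegral_congr fun ε => hind ε
      _ = ∫⁻ ε in Ici (ξ ω) ∩ Ioi 0, ENNReal.ofReal (l * Real.exp (-(l * ε))) := by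
          rw [lintegral_indicator measurableSet_Ici, Measure.restrict_restrict measurableSet_Ici]
      _ = ∫⁻ ε in Ioi (ξ ω), ENNReal.ofReal (l * Real.exp (-(l * ε))) := by
          apply setLIntegral_congr
          have h1 : (Ici (ξ ω) ∩ Ioi 0) \ Ioi (ξ ω) ⊆ {ξ ω} := by
            intro y hy
            simp only [mem_diff, mem_inter_iff, mem_Ici, mem_Ioi, not_lt, mem_singleton_iff] at *
            linarith [hy.1.1, hy.2]
          have h2 : Ioi (ξ ω) \ (Ici (ξ ω) ∩ Ioi 0) = ∅ := by
            apply eq_empty_iff_forall_notMem.mpr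
            intro y hy
            exact hy.2 ⟨mem_Ici.mpr hy.1.le, mem_Ioi.mpr (lt_of_le_of_lt (hξpos ω) hy.1)⟩
          rw [MeasureTheory.ae_eq_set]
          constructor
          · exact measure_mono_null h1 (measure_singleton _)
          · simp [h2]
      _ = ENNReal.ofReal (Real.exp (-(l * ξ ω))) := exp_lintegral_Ioi l _ hl
  calc ∫⁻ ω, ENNReal.ofReal (Real.exp (-(l * ξ ω))) ∂P
      = ∫⁻ ω, (∫⁻ ε in Ioi (0:ℝ), f ω ε) ∂P := by
        exact (lintegral_congr fun ω => (step1 ω).symm)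
    _ = ∫⁻ ε in Ioi (0:ℝ), (∫⁻ ω, f ω ε ∂P) := by
        exact lintegral_lintegral_swap hmeas_unc.aemeasurable
    _ = ∫⁻ ε in Ioi (0:ℝ), ENNReal.ofReal (l * Real.exp (-(l * ε))) * P {ω | ξ ω ≤ ε} := by
        refine setLIntegral_congr_fun measurableSet_Ioi ?_
        intro ε _
        have : ∀ ω : Ω, f ω ε = ENNReal.ofReal (l * Real.exp (-(l * ε))) *
            {ω : Ω | ξ ω ≤ ε}.indicator (fun _ => (1:ℝ≥0∞)) ω := by
          intro ω
          by_cases h : ξ ω ≤ ε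
          · simp [hf, h, Set.mem_setOf_eq]
          · simp [hf, h, Set.mem_setOf_eq]
        beta_reduce
        rw [lintegral_congr this, lintegral_const_mul _ (measurable_const.indicator
          (measurableSet_le hξmeas measurable_const))]
        congr 1
        rw [lintegral_indicator (measurableSet_le hξmeas measurable_const)]
        simp

lemma poly_integrable (l p : ℝ) (hl : 0 < l) (hp : 1 ≤ p) :
    IntegrableOn (fun ε : ℝ => l * Real.exp (-(l * ε)) * ε ^ p) (Ioi 0) := by
  have h := (integrableOn_rpow_mul_exp_neg_mul_rpow (p := 1) (s := p) (b := l)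
    (by linarith) one_pos hl).const_mul l
  apply MeasureTheory.IntegrableOn.congr_fun h ?_ measurableSet_Ioi
  intro x hx
  simp only [Real.rpow_one, neg_mul]
  ring

lemma poly_integral (l p : ℝ) (hl : 0 < l) (hp : 1 ≤ p) :
    ∫ ε in Ioi (0:ℝ), l * Real.exp (-(l * ε)) * ε ^ p
      = Real.Gamma (p + 1) * l ^ (-p) := by
  have h := Real.integral_rpow_mul_exp_neg_mul_Ioi (a := p + 1) (r := l) (by linarith) hl
  have heq : ∀ ε ∈ Ioi (0:ℝ), l * Real.exp (-(l * ε)) * ε ^ p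
      = l * (ε ^ (p + 1 - 1) * Real.exp (-(l * ε))) := by
    intro ε _
    rw [add_sub_cancel_right]
    ring
  rw [setIntegral_congr_fun measurableSet_Ioi heq, integral_const_mul, h]
  have h1 : (1 / l) ^ (p + 1) = l ^ (-(p + 1)) := by
    rw [one_div, ← Real.rpow_neg_one l, ← Real.rpow_mul hl.le]
    ring_nf
  have h2 : l * l ^ (-(p + 1)) = l ^ (-p) := by
    nth_rewrite 1 [← Real.rpow_one l]
    rw [← Real.rpow_add hl]
    ring_nf
  rw [h1, show l * (l ^ (-(p + 1)) * Real.Gamma (p + 1))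
    = l * l ^ (-(p + 1)) * Real.Gamma (p + 1) from by ring, h2]
  ring

/-- If `ξ ≥ 0` is a random variable on a probability space with
`P(ξ ≤ ε) ≤ C e^(-c₁ t ε^(-θ)) + C ε^p` for all `ε ∈ (0,1)`, where `t ∈ (0,1]`, `θ > 0`,
`c₁ ∈ (0,1)`, `C ≥ 1`, `p ≥ 1`, then there is `C' > 0`, depending only on `C` and `p`,
such that for all `λ ≥ t`:
`E[e^(-λξ)] ≤ e^(-t (λ/t)^(θ/(1+θ))) + C e^(-c₁ t (λ/t)^(θ/(1+θ))) + C' λ^(-p)`. -/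
theorem stmt_4 {Ω : Type*} [MeasurableSpace Ω] (P : Measure Ω) [IsProbabilityMeasure P]
    (ξ : Ω → ℝ) (hξmeas : Measurable ξ) (hξpos : ∀ ω, 0 ≤ ξ ω)
    (t θ c₁ C p : ℝ) (ht : t ∈ Ioc (0:ℝ) 1) (hθ : 0 < θ) (hc₁ : c₁ ∈ Ioo (0:ℝ) 1)
    (hC : 1 ≤ C) (hp : 1 ≤ p)
    (htail : ∀ ε ∈ Ioo (0:ℝ) 1,
      (P {ω | ξ ω ≤ ε}).toReal ≤ C * Real.exp (-(c₁ * t * ε ^ (-θ))) + C * ε ^ p) :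
    ∃ C' > (0:ℝ), ∀ l : ℝ, t ≤ l →
      ∫ ω, Real.exp (-(l * ξ ω)) ∂P ≤
        Real.exp (-(t * (l / t) ^ (θ / (1 + θ)))) +
        C * Real.exp (-(c₁ * t * (l / t) ^ (θ / (1 + θ)))) + C' * l ^ (-p) := by
  obtain ⟨ht0, ht1⟩ := ht
  obtain ⟨hc₁0, hc₁1⟩ := hc₁
  have hΓ : 0 < Real.Gamma (p + 1) := Real.Gamma_pos_of_pos (by linarith)
  refine ⟨C * Real.Gamma (p + 1), by positivity, ?_⟩
  intro l hl
  have hl0 : 0 < l := lt_of_lt_of_le ht0 hl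
  have hθ1 : (0:ℝ) < 1 + θ := by linarith
  set a := l / t with ha
  have ha1 : 1 ≤ a := (one_le_div ht0).mpr hl
  have ha0 : 0 < a := lt_of_lt_of_le one_pos ha1
  set s := a ^ (θ / (1 + θ)) with hs
  set r := a ^ (-(1 / (1 + θ))) with hrdef
  have hr0 : 0 < r := Real.rpow_pos_of_pos ha0 _
  have hr1 : r ≤ 1 := Real.rpow_le_one_of_one_le_of_nonpos ha1 (by
    rw [neg_nonpos]; positivity)
  have hlr : l * r = t * s := by
    have hl' : l = t * a := by rw [ha]; field_simp
    rw [hl', mul_assoc]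
    congr 1
    nth_rewrite 1 [← Real.rpow_one a]
    rw [hrdef, ← Real.rpow_add ha0, hs]
    congr 1
    field_simp
    ring
  have hrs : r ^ (-θ) = s := by
    rw [hrdef, ← Real.rpow_mul ha0.le, hs]
    congr 1
    field_simp
  have hs0 : 0 < s := Real.rpow_pos_of_pos ha0 _
  have hgmeas : Measurable fun ε : ℝ => l * Real.exp (-(l * ε)) :=
    ((measurable_id.const_mul l).neg.exp).const_mul l
  -- pass to lintegral
  rw [integral_eq_lintegral_of_nonneg_ae
    (Filter.Eventually.of_forall fun ω => (Real.exp_pos _).le)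
    (by fun_prop : Measurable fun ω => Real.exp (-(l * ξ ω))).aestronglyMeasurable]
  apply ENNReal.toReal_le_of_le_ofReal (by positivity)
  rw [key_swap P ξ hξmeas hξpos l hl0]
  have hsplit : Ioi (0:ℝ) = Ioo 0 r ∪ Ici r := (Ioo_union_Ici_eq_Ioi hr0).symm
  rw [hsplit, lintegral_union measurableSet_Ici
    (Set.disjoint_left.mpr fun x hx h2 => absurd hx.2 (not_lt.mpr h2))]
  -- Ici piece
  have hIci : ∫⁻ ε in Ici r, ENNReal.ofReal (l * Real.exp (-(l * ε))) * P {ω | ξ ω ≤ ε}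
      ≤ ENNReal.ofReal (Real.exp (-(t * s))) := by
    calc ∫⁻ ε in Ici r, ENNReal.ofReal (l * Real.exp (-(l * ε))) * P {ω | ξ ω ≤ ε}
        ≤ ∫⁻ ε in Ici r, ENNReal.ofReal (l * Real.exp (-(l * ε))) := by
          apply lintegral_mono
          intro ε
          calc ENNReal.ofReal (l * Real.exp (-(l * ε))) * P {ω | ξ ω ≤ ε}
              ≤ ENNReal.ofReal (l * Real.exp (-(l * ε))) * 1 := mul_le_mul_right prob_le_one _
            _ = ENNReal.ofReal (l * Real.exp (-(l * ε))) := mul_one _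
      _ = ∫⁻ ε in Ioi r, ENNReal.ofReal (l * Real.exp (-(l * ε))) :=
          setLIntegral_congr (MeasureTheory.Ioi_ae_eq_Ici (a := r)).symm
      _ = ENNReal.ofReal (Real.exp (-(l * r))) := exp_lintegral_Ioi l r hl0
      _ = ENNReal.ofReal (Real.exp (-(t * s))) := by rw [hlr]
  -- Ioo piece
  have hIoo : ∫⁻ ε in Ioo 0 r, ENNReal.ofReal (l * Real.exp (-(l * ε))) * P {ω | ξ ω ≤ ε}
      ≤ ENNReal.ofReal (C * Real.exp (-(c₁ * t * s)))
        + ENNReal.ofReal (C * Real.Gamma (p + 1) * l ^ (-p)) := by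
    have hmono : ∀ ε ∈ Ioo (0:ℝ) r,
        ENNReal.ofReal (l * Real.exp (-(l * ε))) * P {ω | ξ ω ≤ ε}
          ≤ ENNReal.ofReal (l * Real.exp (-(l * ε)) * (C * Real.exp (-(c₁ * t * s))))
            + ENNReal.ofReal (l * Real.exp (-(l * ε)) * (C * ε ^ p)) := by
      intro ε hε
      have hε0 := hε.1
      have hε1 : ε < 1 := lt_of_lt_of_le hε.2 hr1
      have htail' := htail ε ⟨hε0, hε1⟩
      have hsε : s ≤ ε ^ (-θ) := by
        rw [← hrs]
        exact Real.rpow_le_rpow_of_nonpos hε0 hε.2.le (neg_nonpos.mpr hθ.le)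
      have hexp : Real.exp (-(c₁ * t * ε ^ (-θ))) ≤ Real.exp (-(c₁ * t * s)) := by
        apply Real.exp_le_exp.mpr
        nlinarith [mul_le_mul_of_nonneg_left hsε (by positivity : (0:ℝ) ≤ c₁ * t)]
      have hP : P {ω | ξ ω ≤ ε}
          ≤ ENNReal.ofReal (C * Real.exp (-(c₁ * t * s)) + C * ε ^ p) := by
        rw [← ENNReal.ofReal_toReal (measure_ne_top P _)]
        apply ENNReal.ofReal_le_ofReal
        calc (P {ω | ξ ω ≤ ε}).toReal
            ≤ C * Real.exp (-(c₁ * t * ε ^ (-θ))) + C * ε ^ p := htail'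
          _ ≤ C * Real.exp (-(c₁ * t * s)) + C * ε ^ p :=
            add_le_add (mul_le_mul_of_nonneg_left hexp (by linarith)) le_rfl
      calc ENNReal.ofReal (l * Real.exp (-(l * ε))) * P {ω | ξ ω ≤ ε}
          ≤ ENNReal.ofReal (l * Real.exp (-(l * ε)))
              * ENNReal.ofReal (C * Real.exp (-(c₁ * t * s)) + C * ε ^ p) :=
            mul_le_mul_right hP _
        _ = ENNReal.ofReal (l * Real.exp (-(l * ε))
              * (C * Real.exp (-(c₁ * t * s)) + C * ε ^ p)) :=
            (ENNReal.ofReal_mul (by positivity)).symm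
        _ = ENNReal.ofReal (l * Real.exp (-(l * ε)) * (C * Real.exp (-(c₁ * t * s)))
              + l * Real.exp (-(l * ε)) * (C * ε ^ p)) := by ring_nf
        _ ≤ ENNReal.ofReal (l * Real.exp (-(l * ε)) * (C * Real.exp (-(c₁ * t * s))))
              + ENNReal.ofReal (l * Real.exp (-(l * ε)) * (C * ε ^ p)) :=
            ENNReal.ofReal_add_le
    have hterm1 : ∫⁻ ε in Ioo 0 r,
        ENNReal.ofReal (l * Real.exp (-(l * ε)) * (C * Real.exp (-(c₁ * t * s))))
          ≤ ENNReal.ofReal (C * Real.exp (-(c₁ * t * s))) := by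
      calc ∫⁻ ε in Ioo 0 r,
          ENNReal.ofReal (l * Real.exp (-(l * ε)) * (C * Real.exp (-(c₁ * t * s))))
          = ∫⁻ ε in Ioo 0 r, ENNReal.ofReal (C * Real.exp (-(c₁ * t * s)))
              * ENNReal.ofReal (l * Real.exp (-(l * ε))) := by
            apply lintegral_congr
            intro ε
            rw [← ENNReal.ofReal_mul (by positivity)]
            ring_nf
        _ = ENNReal.ofReal (C * Real.exp (-(c₁ * t * s)))
              * ∫⁻ ε in Ioo 0 r, ENNReal.ofReal (l * Real.exp (-(l * ε))) :=
            lintegral_const_mul _ hgmeas.ennreal_ofReal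
        _ ≤ ENNReal.ofReal (C * Real.exp (-(c₁ * t * s)))
              * ENNReal.ofReal (Real.exp (-(l * 0))) := by
            apply mul_le_mul_right
            calc ∫⁻ ε in Ioo 0 r, ENNReal.ofReal (l * Real.exp (-(l * ε)))
                ≤ ∫⁻ ε in Ioi 0, ENNReal.ofReal (l * Real.exp (-(l * ε))) :=
                  lintegral_mono_set Ioo_subset_Ioi_self
              _ = ENNReal.ofReal (Real.exp (-(l * 0))) := exp_lintegral_Ioi l 0 hl0
        _ = ENNReal.ofReal (C * Real.exp (-(c₁ * t * s))) := by
            norm_num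
    have hterm2 : ∫⁻ ε in Ioo 0 r,
        ENNReal.ofReal (l * Real.exp (-(l * ε)) * (C * ε ^ p))
          ≤ ENNReal.ofReal (C * Real.Gamma (p + 1) * l ^ (-p)) := by
      have hint2 : IntegrableOn (fun ε : ℝ => l * Real.exp (-(l * ε)) * (C * ε ^ p))
          (Ioi 0) := by
        have := (poly_integrable l p hl0 hp).const_mul C
        apply MeasureTheory.IntegrableOn.congr_fun this ?_ measurableSet_Ioi
        intro x _
        ring
      have hnn2 : 0 ≤ᵐ[volume.restrict (Ioi (0:ℝ))]
          fun ε : ℝ => l * Real.exp (-(l * ε)) * (C * ε ^ p) := by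
        filter_upwards [self_mem_ae_restrict measurableSet_Ioi] with x hx
        have hx0 : (0:ℝ) < x := hx
        positivity
      calc ∫⁻ ε in Ioo 0 r, ENNReal.ofReal (l * Real.exp (-(l * ε)) * (C * ε ^ p))
          ≤ ∫⁻ ε in Ioi 0, ENNReal.ofReal (l * Real.exp (-(l * ε)) * (C * ε ^ p)) :=
            lintegral_mono_set Ioo_subset_Ioi_self
        _ = ENNReal.ofReal (∫ ε in Ioi 0, l * Real.exp (-(l * ε)) * (C * ε ^ p)) :=
            (ofReal_integral_eq_lintegral_ofReal hint2 hnn2).symm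
        _ = ENNReal.ofReal (C * Real.Gamma (p + 1) * l ^ (-p)) := by
            have : ∀ ε ∈ Ioi (0:ℝ), l * Real.exp (-(l * ε)) * (C * ε ^ p)
                = C * (l * Real.exp (-(l * ε)) * ε ^ p) := by
              intro ε _; ring
            rw [setIntegral_congr_fun measurableSet_Ioi this, integral_const_mul,
              poly_integral l p hl0 hp]
            ring_nf
    calc ∫⁻ ε in Ioo 0 r, ENNReal.ofReal (l * Real.exp (-(l * ε))) * P {ω | ξ ω ≤ ε}
        ≤ ∫⁻ ε in Ioo 0 r,
            (ENNReal.ofReal (l * Real.exp (-(l * ε)) * (C * Real.exp (-(c₁ * t * s))))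
              + ENNReal.ofReal (l * Real.exp (-(l * ε)) * (C * ε ^ p))) :=
          setLIntegral_mono' measurableSet_Ioo hmono
      _ = (∫⁻ ε in Ioo 0 r,
            ENNReal.ofReal (l * Real.exp (-(l * ε)) * (C * Real.exp (-(c₁ * t * s)))))
          + ∫⁻ ε in Ioo 0 r, ENNReal.ofReal (l * Real.exp (-(l * ε)) * (C * ε ^ p)) :=
          lintegral_add_left ((hgmeas.mul measurable_const).ennreal_ofReal) _
      _ ≤ ENNReal.ofReal (C * Real.exp (-(c₁ * t * s)))
          + ENNReal.ofReal (C * Real.Gamma (p + 1) * l ^ (-p)) := add_le_add hterm1 hterm2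
  calc (∫⁻ ε in Ioo 0 r, ENNReal.ofReal (l * Real.exp (-(l * ε))) * P {ω | ξ ω ≤ ε})
        + ∫⁻ ε in Ici r, ENNReal.ofReal (l * Real.exp (-(l * ε))) * P {ω | ξ ω ≤ ε}
      ≤ (ENNReal.ofReal (C * Real.exp (-(c₁ * t * s)))
          + ENNReal.ofReal (C * Real.Gamma (p + 1) * l ^ (-p)))
        + ENNReal.ofReal (Real.exp (-(t * s))) := add_le_add hIoo hIci
    _ = ENNReal.ofReal (Real.exp (-(t * s)) + C * Real.exp (-(c₁ * t * s))
          + C * Real.Gamma (p + 1) * l ^ (-p)) := by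
        rw [← ENNReal.ofReal_add (by positivity) (by positivity),
          ← ENNReal.ofReal_add (by positivity) (by positivity)]
        congr 1
        ring
end

section
/- Let q ∈ (1,2), δ > 0, C₀ > 0, and let ν be a finite Borel measure on {z ∈ ℝ^d : |z| ≥ δ} with ∫ |z|^q ν(dz) < ∞. Let σ : ℝ^d × ℝ^d → ℝ^d be such that for each z with |z| ≥ δ, the map x ↦ σ(x,z) is twice continuously differentiable with ‖∇_x σ(·,z)‖_∞ ≤ C₀(1+|z|) and ‖∇²_x σ(·,z)‖_∞ ≤ C₀(1+|z|), and (x,z) ↦ σ(x,z) is measurable. Define ℒ₁f(x) := ∫_{|z|≥δ} (f(x + σ(x,z)) − f(x)) ν(dz). Then there is a constant C depending only on C₀, q and d such that for every bounded continuously differentiable f : ℝ^d → ℝ with bounded gradient and [∇f]_{q−1} < ∞, the function ℒ₁f is continuously differentiable and ‖ℒ₁f‖_∞ + ‖∇(ℒ₁f)‖_∞ + [∇(ℒ₁f)]_{q−1} ≤ C (‖f‖_∞ + ‖∇f‖_∞ + [∇f]_{q−1}) ∫_{|z|≥δ} (1 + |z|^q) ν(dz). -/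
set_option maxHeartbeats 1000000
open Topology MeasureTheory Set Filter ContinuousLinearMap

section helpers
variable {d : ℕ} {α : Type*} [MeasurableSpace α]

noncomputable def psiMap (d : ℕ) (c : Fin d → EuclideanSpace ℝ (Fin d)) :
    EuclideanSpace ℝ (Fin d) →L[ℝ] EuclideanSpace ℝ (Fin d) :=
  ∑ i, (innerSL ℝ ((EuclideanSpace.basisFun (Fin d) ℝ) i)).smulRight (c i)

lemma psiMap_eq (d : ℕ) (L : EuclideanSpace ℝ (Fin d) →L[ℝ] EuclideanSpace ℝ (Fin d)) :
    psiMap d (fun i => L ((EuclideanSpace.basisFun (Fin d) ℝ) i)) = L := by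
  refine ContinuousLinearMap.ext fun w => ?_
  have hw := (EuclideanSpace.basisFun (Fin d) ℝ).sum_repr' w
  conv_rhs => rw [← hw, map_sum]
  simp [psiMap, ContinuousLinearMap.sum_apply]

lemma psiMap_continuous (d : ℕ) : Continuous (psiMap d) := by
  apply continuous_finset_sum
  intro i _
  exact (ContinuousLinearMap.smulRightL ℝ _ _
    (innerSL ℝ ((EuclideanSpace.basisFun (Fin d) ℝ) i))).continuous.comp (continuous_apply i)

lemma aesm_fderiv_param {μ : Measure α}
    (σ : EuclideanSpace ℝ (Fin d) → α → EuclideanSpace ℝ (Fin d))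
    (hσmeas : Measurable (Function.uncurry σ))
    (x₀ : EuclideanSpace ℝ (Fin d))
    (hdiff : ∀ᵐ z ∂μ, DifferentiableAt ℝ (fun x => σ x z) x₀) :
    AEStronglyMeasurable (fun z => fderiv ℝ (fun x => σ x z) x₀) μ := by
  classical
  set b := EuclideanSpace.basisFun (Fin d) ℝ with hb
  have hσz : ∀ x, Measurable (fun z => σ x z) := fun x => hσmeas.of_uncurry_left
  have hLmeas : ∀ n : ℕ, Measurable (fun z => psiMap d
      (fun i => ((n : ℝ) + 1) • (σ (x₀ + ((n : ℝ) + 1)⁻¹ • b i) z - σ x₀ z))) := by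
    intro n
    apply (psiMap_continuous d).measurable.comp
    apply measurable_pi_lambda
    intro i
    exact (((hσz _).sub (hσz _)).const_smul ((n : ℝ) + 1))
  have key : ∀ᵐ z ∂μ, Tendsto (fun n : ℕ => psiMap d
      (fun i => ((n : ℝ) + 1) • (σ (x₀ + ((n : ℝ) + 1)⁻¹ • b i) z - σ x₀ z))) atTop
      (𝓝 (fderiv ℝ (fun x => σ x z) x₀)) := by
    filter_upwards [hdiff] with z hz
    have hlim : ∀ i, Tendsto (fun n : ℕ =>
        ((n : ℝ) + 1) • (σ (x₀ + ((n : ℝ) + 1)⁻¹ • b i) z - σ x₀ z)) atTop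
        (𝓝 (fderiv ℝ (fun x => σ x z) x₀ (b i))) := by
      intro i
      refine hz.hasFDerivAt.lim (b i) (c := fun n : ℕ => (n : ℝ) + 1) (l := atTop) ?_
      have h1 : Tendsto (fun n : ℕ => (n : ℝ) + 1) atTop atTop :=
        tendsto_atTop_add_const_right atTop 1 tendsto_natCast_atTop_atTop
      simpa [Real.norm_eq_abs, Function.comp_def] using tendsto_abs_atTop_atTop.comp h1
    have h2 : Tendsto (fun n : ℕ => (fun i =>
        ((n : ℝ) + 1) • (σ (x₀ + ((n : ℝ) + 1)⁻¹ • b i) z - σ x₀ z))) atTop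
        (𝓝 (fun i => fderiv ℝ (fun x => σ x z) x₀ (b i))) := tendsto_pi_nhds.2 hlim
    have h3 := ((psiMap_continuous d).tendsto _).comp h2
    rw [psiMap_eq] at h3
    exact h3
  exact (aemeasurable_of_tendsto_metrizable_ae atTop
    (fun n => (hLmeas n).aemeasurable) key).aestronglyMeasurable

lemma sc_ineq1 {q t : ℝ} (hq1 : 1 ≤ q) (ht : 0 ≤ t) : t ≤ 1 + t ^ q := by
  rcases le_total t 1 with h | h
  · have : (0:ℝ) ≤ t ^ q := Real.rpow_nonneg ht q
    linarith
  · have h2 : t ^ (1:ℝ) ≤ t ^ q := Real.rpow_le_rpow_of_exponent_le h hq1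
    rw [Real.rpow_one] at h2
    linarith

lemma sc_ineq2 {q t C₀ : ℝ} (hq1 : 1 ≤ q) (hq2 : q ≤ 2) (hC₀ : 0 ≤ C₀) (ht : 0 ≤ t) :
    (1 + C₀ * (1 + t)) ^ q ≤ (1 + 2 * C₀) ^ 2 * (1 + t ^ q) := by
  have hq0 : 0 ≤ q := by linarith
  have hbase : (1:ℝ) ≤ 1 + 2 * C₀ := by linarith
  have htq : (0:ℝ) ≤ t ^ q := Real.rpow_nonneg ht q
  have hsq : ((1 + 2 * C₀) : ℝ) ^ (q : ℝ) ≤ (1 + 2 * C₀) ^ (2:ℕ) := by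
    have := Real.rpow_le_rpow_of_exponent_le hbase hq2
    rwa [show ((2:ℝ)) = ((2:ℕ) : ℝ) by norm_num, Real.rpow_natCast] at this
  rcases le_total t 1 with h | h
  · have h1 : (1 + C₀ * (1 + t)) ≤ 1 + 2 * C₀ := by nlinarith
    have h2 : (1 + C₀ * (1 + t)) ^ q ≤ (1 + 2 * C₀) ^ q :=
      Real.rpow_le_rpow (by nlinarith) h1 hq0
    have h3 : ((1 + 2 * C₀):ℝ) ^ (2:ℕ) ≤ (1 + 2 * C₀) ^ (2:ℕ) * (1 + t ^ q) := by
      nlinarith [sq_nonneg (1 + 2 * C₀)]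
    calc (1 + C₀ * (1 + t)) ^ q ≤ (1 + 2 * C₀) ^ q := h2
      _ ≤ ((1 + 2 * C₀):ℝ) ^ (2:ℕ) := hsq
      _ ≤ _ := h3
  · have h1 : (1 + C₀ * (1 + t)) ≤ (1 + 2 * C₀) * t := by nlinarith
    have h2 : (1 + C₀ * (1 + t)) ^ q ≤ ((1 + 2 * C₀) * t) ^ q :=
      Real.rpow_le_rpow (by nlinarith) h1 hq0
    have h3 : ((1 + 2 * C₀) * t) ^ q = (1 + 2 * C₀) ^ q * t ^ q :=
      Real.mul_rpow (by linarith) ht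
    have h4 : ((1 + 2 * C₀):ℝ) ^ q * t ^ q ≤ (1 + 2 * C₀) ^ (2:ℕ) * t ^ q :=
      mul_le_mul_of_nonneg_right hsq htq
    have h5 : ((1 + 2 * C₀):ℝ) ^ (2:ℕ) * t ^ q ≤ (1 + 2 * C₀) ^ (2:ℕ) * (1 + t ^ q) := by
      nlinarith [sq_nonneg (1 + 2 * C₀)]
    calc (1 + C₀ * (1 + t)) ^ q ≤ ((1 + 2 * C₀) * t) ^ q := h2
      _ = (1 + 2 * C₀) ^ q * t ^ q := h3
      _ ≤ (1 + 2 * C₀) ^ (2:ℕ) * t ^ q := h4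
      _ ≤ _ := h5

lemma sc_ineq3 {q s : ℝ} (hq1 : 1 < q) (hq2 : q < 2) (hs : 0 ≤ s) :
    min 1 s ≤ s ^ (q - 1) := by
  rcases le_total s 1 with h | h
  · have h2 : s ^ (1:ℝ) ≤ s ^ (q - 1) :=
      Real.rpow_le_rpow_of_exponent_ge' hs h (by linarith) (by linarith)
    rw [Real.rpow_one] at h2
    exact le_trans (min_le_right _ _) h2
  · have h2 : s ^ (0:ℝ) ≤ s ^ (q - 1) :=
      Real.rpow_le_rpow_of_exponent_le h (by linarith)
    rw [Real.rpow_zero] at h2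
    exact le_trans (min_le_left _ _) h2

lemma coef_ineq {C₀ Mf Kf Hf : ℝ} (hC₀ : 0 < C₀) (hM0 : 0 ≤ Mf) (hK0 : 0 ≤ Kf)
    (hH0 : 0 ≤ Hf) :
    Hf * (1 + 2 * C₀) ^ 2 + Kf * (4 * C₀) + Hf ≤ (Mf + Kf + Hf) * (3 * (1 + 2 * C₀) ^ 2) := by
  nlinarith [mul_nonneg hH0 (show (0:ℝ) ≤ 2 * (1 + 2 * C₀) ^ 2 - 1 by nlinarith),
    mul_nonneg hK0 (show (0:ℝ) ≤ 3 * (1 + 2 * C₀) ^ 2 - 4 * C₀ by nlinarith),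
    mul_nonneg hM0 (show (0:ℝ) ≤ 3 * (1 + 2 * C₀) ^ 2 by positivity)]

end helpers

/-- Let `q ∈ (1,2)`, `δ > 0`, `ν` a finite measure on `{|z| ≥ δ}` with
`∫|z|^q ν(dz) < ∞`, and `σ(·,z)` be `C²` in `x` with first and second derivatives bounded by
`C₀(1+|z|)`. Then there is `C = C(C₀,q,d)` such that for every bounded `C¹` function `f` with
bounded gradient and finite `[∇f]_{q-1}`, the function `ℒ₁f(x) = ∫(f(x+σ(x,z))-f(x)) ν(dz)`
is `C¹` and `‖ℒ₁f‖_∞ + ‖∇ℒ₁f‖_∞ + [∇ℒ₁f]_{q-1} ≤ C (‖f‖_∞+‖∇f‖_∞+[∇f]_{q-1}) ∫(1+|z|^q) ν(dz)`. -/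
theorem stmt_7 {d : ℕ} (q δ C₀ : ℝ) (hq : q ∈ Ioo (1:ℝ) 2) (hδ : 0 < δ) (hC₀ : 0 < C₀)
    (ν : Measure (EuclideanSpace ℝ (Fin d))) [IsFiniteMeasure ν]
    (hsupp : ν {z | ‖z‖ < δ} = 0)
    (hmom : Integrable (fun z => ‖z‖ ^ q) ν)
    (σ : EuclideanSpace ℝ (Fin d) → EuclideanSpace ℝ (Fin d) → EuclideanSpace ℝ (Fin d))
    (hσmeas : Measurable (Function.uncurry σ))
    (hσdiff : ∀ z, δ ≤ ‖z‖ → ContDiff ℝ 2 (fun x => σ x z))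
    (hσ1 : ∀ z, δ ≤ ‖z‖ → ∀ x, ‖fderiv ℝ (fun y => σ y z) x‖ ≤ C₀ * (1 + ‖z‖))
    (hσ2 : ∀ z, δ ≤ ‖z‖ → ∀ x,
      ‖iteratedFDeriv ℝ 2 (fun y => σ y z) x‖ ≤ C₀ * (1 + ‖z‖)) :
    ∃ C > (0:ℝ), ∀ (f : EuclideanSpace ℝ (Fin d) → ℝ) (Mf Kf Hf : ℝ),
      ContDiff ℝ 1 f → (∀ x, |f x| ≤ Mf) → (∀ x, ‖fderiv ℝ f x‖ ≤ Kf) →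
      (∀ x y, ‖fderiv ℝ f x - fderiv ℝ f y‖ ≤ Hf * ‖x - y‖ ^ (q - 1)) →
      ContDiff ℝ 1 (fun x => ∫ z, (f (x + σ x z) - f x) ∂ν) ∧
      (∀ x, |∫ z, (f (x + σ x z) - f x) ∂ν| ≤
        C * (Mf + Kf + Hf) * ∫ z, (1 + ‖z‖ ^ q) ∂ν) ∧
      (∀ x, ‖fderiv ℝ (fun x => ∫ z, (f (x + σ x z) - f x) ∂ν) x‖ ≤
        C * (Mf + Kf + Hf) * ∫ z, (1 + ‖z‖ ^ q) ∂ν) ∧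
      (∀ x y, ‖fderiv ℝ (fun x => ∫ z, (f (x + σ x z) - f x) ∂ν) x -
          fderiv ℝ (fun x => ∫ z, (f (x + σ x z) - f x) ∂ν) y‖ ≤
        (C * (Mf + Kf + Hf) * ∫ z, (1 + ‖z‖ ^ q) ∂ν) * ‖x - y‖ ^ (q - 1)) := by
  classical
  obtain ⟨hq1, hq2⟩ := hq
  rcases eq_or_ne ν 0 with rfl | hν
  · refine ⟨1, one_pos, ?_⟩
    intro f Mf Kf Hf hf hMf hKf hHf
    simp only [integral_zero_measure]
    refine ⟨contDiff_const, ?_, ?_, ?_⟩ <;> simp [fderiv_const]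
  -- main case
  refine ⟨3 * (1 + 2 * C₀) ^ 2, by positivity, ?_⟩
  intro f Mf Kf Hf hf hMf hKf hHf
  set C : ℝ := 3 * (1 + 2 * C₀) ^ 2 with hCdef
  have hCpos : 0 < C := by positivity
  -- a.e. support
  have hae : ∀ᵐ z ∂ν, δ ≤ ‖z‖ := by
    rw [ae_iff]
    have : {z : EuclideanSpace ℝ (Fin d) | ¬ δ ≤ ‖z‖} = {z : EuclideanSpace ℝ (Fin d) | ‖z‖ < δ} := by ext z; simp [not_le]
    rw [this]; exact hsupp
  -- nonnegativity of the constants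
  have hM0 : 0 ≤ Mf := (abs_nonneg _).trans (hMf 0)
  have hK0 : 0 ≤ Kf := (norm_nonneg _).trans (hKf 0)
  have hH0 : 0 ≤ Hf := by
    have hU : ν {z : EuclideanSpace ℝ (Fin d) | δ ≤ ‖z‖} ≠ 0 := by
      intro h0
      apply hν
      have : (univ : Set (EuclideanSpace ℝ (Fin d))) ⊆ {z : EuclideanSpace ℝ (Fin d) | ‖z‖ < δ} ∪ {z : EuclideanSpace ℝ (Fin d) | δ ≤ ‖z‖} := by
        intro z _; rcases lt_or_ge ‖z‖ δ with h | h
        · exact Or.inl h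
        · exact Or.inr h
      have hle : ν univ ≤ ν {z : EuclideanSpace ℝ (Fin d) | ‖z‖ < δ}
          + ν {z : EuclideanSpace ℝ (Fin d) | δ ≤ ‖z‖} :=
        le_trans (measure_mono this) (measure_union_le _ _)
      rw [hsupp, h0, add_zero] at hle
      exact Measure.measure_univ_eq_zero.mp (le_antisymm hle zero_le)
    obtain ⟨z₀, hz₀⟩ := nonempty_of_measure_ne_zero hU
    have hz₀' : δ ≤ ‖z₀‖ := hz₀
    have hzpos : (0:ℝ) < ‖z₀ - 0‖ := by
      rw [sub_zero]; linarith
    have h1 := (norm_nonneg (fderiv ℝ f z₀ - fderiv ℝ f 0)).trans (hHf z₀ 0)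
    have h2 : (0:ℝ) < ‖z₀ - (0:EuclideanSpace ℝ (Fin d))‖ ^ (q - 1) := Real.rpow_pos_of_pos hzpos _
    nlinarith
  -- basic integrability
  have hwnn : ∀ z : EuclideanSpace ℝ (Fin d), (0:ℝ) ≤ 1 + ‖z‖ ^ q := fun z => by
    have := Real.rpow_nonneg (norm_nonneg z) q; linarith
  have hInt1 : Integrable (fun z : EuclideanSpace ℝ (Fin d) => 1 + ‖z‖ ^ q) ν := (integrable_const 1).add hmom
  have hIw : (0:ℝ) ≤ ∫ z, (1 + ‖z‖ ^ q) ∂ν := integral_nonneg hwnn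
  -- differentiability of σ in x
  have hdiffσ : ∀ z : EuclideanSpace ℝ (Fin d), δ ≤ ‖z‖ → ∀ x, DifferentiableAt ℝ (fun y => σ y z) x :=
    fun z hz x => ((hσdiff z hz).differentiable (by norm_num)).differentiableAt
  -- Lipschitz bounds
  have hLipσ : ∀ z : EuclideanSpace ℝ (Fin d), δ ≤ ‖z‖ → ∀ x y : EuclideanSpace ℝ (Fin d),
      ‖σ x z - σ y z‖ ≤ C₀ * (1 + ‖z‖) * ‖x - y‖ := by
    intro z hz x y
    exact convex_univ.norm_image_sub_le_of_norm_fderiv_le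
      (fun w _ => hdiffσ z hz w) (fun w _ => hσ1 z hz w) (mem_univ y) (mem_univ x)
  have hLipDσ : ∀ z : EuclideanSpace ℝ (Fin d), δ ≤ ‖z‖ → ∀ x y : EuclideanSpace ℝ (Fin d),
      ‖fderiv ℝ (fun y => σ y z) x - fderiv ℝ (fun y => σ y z) y‖ ≤
        C₀ * (1 + ‖z‖) * ‖x - y‖ := by
    intro z hz x y
    have hg : Differentiable ℝ (fderiv ℝ (fun y => σ y z)) :=
      ((hσdiff z hz).fderiv_right (m := 1) (by norm_num)).differentiable one_ne_zero
    have hbd : ∀ w : EuclideanSpace ℝ (Fin d), ‖fderiv ℝ (fderiv ℝ (fun y => σ y z)) w‖ ≤ C₀ * (1 + ‖z‖) := by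
      intro w
      have e1 : ‖fderiv ℝ (fderiv ℝ (fun y => σ y z)) w‖
          = ‖iteratedFDeriv ℝ 2 (fun y => σ y z) w‖ := by
        rw [← norm_iteratedFDeriv_zero (𝕜 := ℝ) (f := fderiv ℝ (fderiv ℝ (fun y => σ y z))) (x := w)]
        rw [norm_iteratedFDeriv_fderiv, norm_iteratedFDeriv_fderiv]
      rw [e1]; exact hσ2 z hz w
    exact convex_univ.norm_image_sub_le_of_norm_fderiv_le
      (fun w _ => (hg w)) (fun w _ => hbd w) (mem_univ y) (mem_univ x)
  -- the derivative candidate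
  set F' : EuclideanSpace ℝ (Fin d) → EuclideanSpace ℝ (Fin d) → (EuclideanSpace ℝ (Fin d) →L[ℝ] ℝ) := fun x z =>
    ((fderiv ℝ f (x + σ x z)).comp
      ((ContinuousLinearMap.id ℝ (EuclideanSpace ℝ (Fin d))) + fderiv ℝ (fun y => σ y z) x)) - fderiv ℝ f x
    with hF'def
  have hfd' : Differentiable ℝ f := hf.differentiable one_ne_zero
  have hF'diff : ∀ z : EuclideanSpace ℝ (Fin d), δ ≤ ‖z‖ → ∀ x : EuclideanSpace ℝ (Fin d),
      HasFDerivAt (fun x => f (x + σ x z) - f x) (F' x z) x := by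
    intro z hz x
    have h1 : HasFDerivAt (fun x : EuclideanSpace ℝ (Fin d) => x + σ x z)
        ((ContinuousLinearMap.id ℝ (EuclideanSpace ℝ (Fin d))) + fderiv ℝ (fun y => σ y z) x) x :=
      (hasFDerivAt_id x).add (hdiffσ z hz x).hasFDerivAt
    have h2 := ((hfd' (x + σ x z)).hasFDerivAt).comp x h1
    exact h2.sub (hfd' x).hasFDerivAt
  -- uniform bound on F'
  have hF'bd : ∀ z : EuclideanSpace ℝ (Fin d), δ ≤ ‖z‖ → ∀ x : EuclideanSpace ℝ (Fin d),
      ‖F' x z‖ ≤ Kf * (2 + 2 * C₀) * (1 + ‖z‖ ^ q) := by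
    intro z hz x
    have htq : (0:ℝ) ≤ ‖z‖ ^ q := Real.rpow_nonneg (norm_nonneg z) q
    have ht1 : ‖z‖ ≤ 1 + ‖z‖ ^ q := sc_ineq1 hq1.le (norm_nonneg z)
    have hA : ‖fderiv ℝ f (x + σ x z)‖ ≤ Kf := hKf _
    have hB : ‖ContinuousLinearMap.id ℝ (EuclideanSpace ℝ (Fin d))
        + fderiv ℝ (fun y => σ y z) x‖ ≤ 1 + C₀ * (1 + ‖z‖) := by
      refine (norm_add_le _ _).trans ?_
      have h1 := hσ1 z hz x
      have hid : ‖ContinuousLinearMap.id ℝ (EuclideanSpace ℝ (Fin d))‖ ≤ 1 :=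
        ContinuousLinearMap.norm_id_le
      linarith
    have h3 : ‖F' x z‖ ≤ Kf * (1 + C₀ * (1 + ‖z‖)) + Kf := by
      refine (norm_sub_le _ _).trans ?_
      have h2 := ContinuousLinearMap.opNorm_comp_le (fderiv ℝ f (x + σ x z))
        (ContinuousLinearMap.id ℝ (EuclideanSpace ℝ (Fin d)) + fderiv ℝ (fun y => σ y z) x)
      have h4 : ‖fderiv ℝ f (x + σ x z)‖ *
          ‖ContinuousLinearMap.id ℝ (EuclideanSpace ℝ (Fin d)) + fderiv ℝ (fun y => σ y z) x‖
          ≤ Kf * (1 + C₀ * (1 + ‖z‖)) :=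
        mul_le_mul hA hB (norm_nonneg _) hK0
      have h5 := hKf x
      linarith
    refine h3.trans ?_
    nlinarith [mul_le_mul_of_nonneg_left
      (show (2:ℝ) + C₀ * (1 + ‖z‖) ≤ (2 + 2 * C₀) * (1 + ‖z‖ ^ q) by
        nlinarith [mul_le_mul_of_nonneg_left ht1 hC₀.le, mul_nonneg hC₀.le htq]) hK0]
  -- measurability
  have hmeasg : ∀ x : EuclideanSpace ℝ (Fin d), AEStronglyMeasurable (fun z => f (x + σ x z) - f x) ν := by
    intro x
    have h1 : Measurable (fun z => x + σ x z) :=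
      (hσmeas.of_uncurry_left (x := x)).const_add x
    exact ((hf.continuous.measurable.comp h1).sub measurable_const).aestronglyMeasurable
  have hmeasF' : ∀ x : EuclideanSpace ℝ (Fin d), AEStronglyMeasurable (fun z => F' x z) ν := by
    intro x
    have hADσ : AEStronglyMeasurable (fun z => fderiv ℝ (fun y => σ y z) x) ν := by
      refine aesm_fderiv_param σ hσmeas x ?_
      filter_upwards [hae] with z hz
      exact hdiffσ z hz x
    have hA : AEStronglyMeasurable (fun z => fderiv ℝ f (x + σ x z)) ν :=
      ((measurable_fderiv ℝ f).comp
        ((hσmeas.of_uncurry_left (x := x)).const_add x)).aestronglyMeasurable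
    have hB : AEStronglyMeasurable (fun z =>
        ContinuousLinearMap.id ℝ (EuclideanSpace ℝ (Fin d)) + fderiv ℝ (fun y => σ y z) x) ν :=
      aestronglyMeasurable_const.add hADσ
    have hcomp : AEStronglyMeasurable (fun z => (fderiv ℝ f (x + σ x z)).comp
        (ContinuousLinearMap.id ℝ (EuclideanSpace ℝ (Fin d)) + fderiv ℝ (fun y => σ y z) x)) ν :=
      (isBoundedBilinearMap_comp (𝕜 := ℝ)).continuous.comp_aestronglyMeasurable
        (hA.prodMk hB)
    exact hcomp.sub aestronglyMeasurable_const
  -- integrability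
  have hIntg : ∀ x : EuclideanSpace ℝ (Fin d), Integrable (fun z => f (x + σ x z) - f x) ν := by
    intro x
    refine (integrable_const (2 * Mf)).mono' (hmeasg x) (ae_of_all _ fun z => ?_)
    have := hMf (x + σ x z); have := hMf x
    rw [Real.norm_eq_abs]
    calc |f (x + σ x z) - f x| ≤ |f (x + σ x z)| + |f x| := abs_sub _ _
      _ ≤ 2 * Mf := by linarith
  have hIntF' : ∀ x : EuclideanSpace ℝ (Fin d), Integrable (fun z => F' x z) ν := by
    intro x
    refine ((hInt1.const_mul (Kf * (2 + 2 * C₀))).mono' (hmeasF' x) ?_)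
    filter_upwards [hae] with z hz
    simpa using hF'bd z hz x
  -- differentiation under the integral
  have hhas : ∀ x₀ : EuclideanSpace ℝ (Fin d), HasFDerivAt (fun x => ∫ z, (f (x + σ x z) - f x) ∂ν)
      (∫ z, F' x₀ z ∂ν) x₀ := by
    intro x₀
    refine hasFDerivAt_integral_of_dominated_of_fderiv_le (s := Metric.ball x₀ 1) (Metric.ball_mem_nhds x₀ one_pos)
      (Eventually.of_forall fun x => hmeasg x) (hIntg x₀) (hmeasF' x₀)
      ?_ (hInt1.const_mul (Kf * (2 + 2 * C₀))) ?_
    · filter_upwards [hae] with z hz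
      intro x _
      exact hF'bd z hz x
    · filter_upwards [hae] with z hz
      intro x _
      exact hF'diff z hz x
  have hfd2 : ∀ x : EuclideanSpace ℝ (Fin d), fderiv ℝ (fun x => ∫ z, (f (x + σ x z) - f x) ∂ν) x
      = ∫ z, F' x z ∂ν := fun x => (hhas x).fderiv
  -- Hölder bound on F' differences
  have hF'hold : ∀ x y : EuclideanSpace ℝ (Fin d), ∀ᵐ z ∂ν, ‖F' x z - F' y z‖ ≤
      ((Mf + Kf + Hf) * C * ‖x - y‖ ^ (q - 1)) * (1 + ‖z‖ ^ q) := by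
    intro x y
    filter_upwards [hae] with z hz
    have hsnn : (0:ℝ) ≤ ‖x - y‖ := norm_nonneg _
    have hq10 : (0:ℝ) ≤ q - 1 := by linarith
    have htq : (0:ℝ) ≤ ‖z‖ ^ q := Real.rpow_nonneg (norm_nonneg z) q
    have ht1 : ‖z‖ ≤ 1 + ‖z‖ ^ q := sc_ineq1 hq1.le (norm_nonneg z)
    have hP : (0:ℝ) ≤ ‖x - y‖ ^ (q - 1) := Real.rpow_nonneg hsnn _
    have hLnn : (0:ℝ) ≤ C₀ * (1 + ‖z‖) := by positivity
    have hLpos : (0:ℝ) < 1 + C₀ * (1 + ‖z‖) := by positivity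
    -- decomposition
    have hid : F' x z - F' y z =
        ((fderiv ℝ f (x + σ x z) - fderiv ℝ f (y + σ y z)).comp
          (ContinuousLinearMap.id ℝ (EuclideanSpace ℝ (Fin d)) + fderiv ℝ (fun y => σ y z) x)
        + (fderiv ℝ f (y + σ y z)).comp
            (fderiv ℝ (fun y => σ y z) x - fderiv ℝ (fun y => σ y z) y))
        - (fderiv ℝ f x - fderiv ℝ f y) := by
      simp only [hF'def]
      simp only [ContinuousLinearMap.sub_comp, ContinuousLinearMap.comp_sub,
        ContinuousLinearMap.comp_add, ContinuousLinearMap.add_comp]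
      abel
    have hsplit : ‖F' x z - F' y z‖ ≤
        ‖(fderiv ℝ f (x + σ x z) - fderiv ℝ f (y + σ y z)).comp
          (ContinuousLinearMap.id ℝ (EuclideanSpace ℝ (Fin d)) + fderiv ℝ (fun y => σ y z) x)‖
        + ‖(fderiv ℝ f (y + σ y z)).comp
            (fderiv ℝ (fun y => σ y z) x - fderiv ℝ (fun y => σ y z) y)‖
        + ‖fderiv ℝ f x - fderiv ℝ f y‖ := by
      rw [hid]
      refine (norm_sub_le _ _).trans ?_
      have := norm_add_le
        ((fderiv ℝ f (x + σ x z) - fderiv ℝ f (y + σ y z)).comp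
          (ContinuousLinearMap.id ℝ (EuclideanSpace ℝ (Fin d)) + fderiv ℝ (fun y => σ y z) x))
        ((fderiv ℝ f (y + σ y z)).comp
            (fderiv ℝ (fun y => σ y z) x - fderiv ℝ (fun y => σ y z) y))
      linarith
    -- term 1
    have harg : ‖(x + σ x z) - (y + σ y z)‖ ≤ (1 + C₀ * (1 + ‖z‖)) * ‖x - y‖ := by
      have h1 : (x + σ x z) - (y + σ y z) = (x - y) + (σ x z - σ y z) := by abel
      rw [h1]
      calc ‖(x - y) + (σ x z - σ y z)‖ ≤ ‖x - y‖ + ‖σ x z - σ y z‖ := norm_add_le _ _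
        _ ≤ ‖x - y‖ + C₀ * (1 + ‖z‖) * ‖x - y‖ := by linarith [hLipσ z hz x y]
        _ = (1 + C₀ * (1 + ‖z‖)) * ‖x - y‖ := by ring
    have hAxy : ‖fderiv ℝ f (x + σ x z) - fderiv ℝ f (y + σ y z)‖ ≤
        Hf * ((1 + C₀ * (1 + ‖z‖)) ^ (q - 1) * ‖x - y‖ ^ (q - 1)) := by
      refine (hHf _ _).trans ?_
      have h2 : ‖(x + σ x z) - (y + σ y z)‖ ^ (q - 1) ≤
          ((1 + C₀ * (1 + ‖z‖)) * ‖x - y‖) ^ (q - 1) :=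
        Real.rpow_le_rpow (norm_nonneg _) harg hq10
      rw [Real.mul_rpow hLpos.le hsnn] at h2
      exact mul_le_mul_of_nonneg_left h2 hH0
    have hBx : ‖ContinuousLinearMap.id ℝ (EuclideanSpace ℝ (Fin d))
        + fderiv ℝ (fun y => σ y z) x‖ ≤ 1 + C₀ * (1 + ‖z‖) := by
      refine (norm_add_le _ _).trans ?_
      have h1 := hσ1 z hz x
      have hid2 : ‖ContinuousLinearMap.id ℝ (EuclideanSpace ℝ (Fin d))‖ ≤ 1 :=
        ContinuousLinearMap.norm_id_le
      linarith
    have hT1 : ‖(fderiv ℝ f (x + σ x z) - fderiv ℝ f (y + σ y z)).comp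
          (ContinuousLinearMap.id ℝ (EuclideanSpace ℝ (Fin d)) + fderiv ℝ (fun y => σ y z) x)‖
        ≤ Hf * ((1 + 2 * C₀) ^ 2 * (1 + ‖z‖ ^ q)) * ‖x - y‖ ^ (q - 1) := by
      refine (ContinuousLinearMap.opNorm_comp_le _ _).trans ?_
      have h3 : ‖fderiv ℝ f (x + σ x z) - fderiv ℝ f (y + σ y z)‖ *
          ‖ContinuousLinearMap.id ℝ (EuclideanSpace ℝ (Fin d)) + fderiv ℝ (fun y => σ y z) x‖
          ≤ (Hf * ((1 + C₀ * (1 + ‖z‖)) ^ (q - 1) * ‖x - y‖ ^ (q - 1))) *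
            (1 + C₀ * (1 + ‖z‖)) :=
        mul_le_mul hAxy hBx (norm_nonneg _) (by positivity)
      refine h3.trans ?_
      have hpow : (1 + C₀ * (1 + ‖z‖)) ^ (q - 1) * (1 + C₀ * (1 + ‖z‖))
          = (1 + C₀ * (1 + ‖z‖)) ^ q := by
        nth_rewrite 2 [← Real.rpow_one (1 + C₀ * (1 + ‖z‖))]
        rw [← Real.rpow_add hLpos, sub_add_cancel]
      have hpow2 : (1 + C₀ * (1 + ‖z‖)) ^ q ≤ (1 + 2 * C₀) ^ 2 * (1 + ‖z‖ ^ q) :=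
        sc_ineq2 hq1.le hq2.le hC₀.le (norm_nonneg z)
      calc Hf * ((1 + C₀ * (1 + ‖z‖)) ^ (q - 1) * ‖x - y‖ ^ (q - 1)) * (1 + C₀ * (1 + ‖z‖))
          = Hf * ((1 + C₀ * (1 + ‖z‖)) ^ (q - 1) * (1 + C₀ * (1 + ‖z‖))) * ‖x - y‖ ^ (q - 1) := by
            ring
        _ = Hf * (1 + C₀ * (1 + ‖z‖)) ^ q * ‖x - y‖ ^ (q - 1) := by rw [hpow]
        _ ≤ Hf * ((1 + 2 * C₀) ^ 2 * (1 + ‖z‖ ^ q)) * ‖x - y‖ ^ (q - 1) := by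
            have := mul_le_mul_of_nonneg_left hpow2 hH0
            exact mul_le_mul_of_nonneg_right this hP
    -- term 2
    have hDs : ‖fderiv ℝ (fun y => σ y z) x - fderiv ℝ (fun y => σ y z) y‖ ≤
        2 * (C₀ * (1 + ‖z‖)) * ‖x - y‖ ^ (q - 1) := by
      rcases le_total ‖x - y‖ 1 with h | h
      · have h1 := hLipDσ z hz x y
        have h2 : ‖x - y‖ ≤ ‖x - y‖ ^ (q - 1) := by
          have h3 : ‖x - y‖ ^ (1:ℝ) ≤ ‖x - y‖ ^ (q - 1) :=
            Real.rpow_le_rpow_of_exponent_ge' hsnn h hq10 (by linarith)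
          rwa [Real.rpow_one] at h3
        linarith [mul_le_mul_of_nonneg_left h2 hLnn, mul_nonneg hLnn hP]
      · have h1 : ‖fderiv ℝ (fun y => σ y z) x - fderiv ℝ (fun y => σ y z) y‖ ≤
            2 * (C₀ * (1 + ‖z‖)) := by
          have h2 := hσ1 z hz x
          have h3 := hσ1 z hz y
          have := norm_sub_le (fderiv ℝ (fun y => σ y z) x) (fderiv ℝ (fun y => σ y z) y)
          linarith
        have h4 : (1:ℝ) ≤ ‖x - y‖ ^ (q - 1) := by
          have h5 : ‖x - y‖ ^ (0:ℝ) ≤ ‖x - y‖ ^ (q - 1) :=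
            Real.rpow_le_rpow_of_exponent_le h hq10
          rwa [Real.rpow_zero] at h5
        linarith [mul_le_mul_of_nonneg_left h4 (by positivity : (0:ℝ) ≤ 2 * (C₀ * (1 + ‖z‖)))]
    have hT2 : ‖(fderiv ℝ f (y + σ y z)).comp
          (fderiv ℝ (fun y => σ y z) x - fderiv ℝ (fun y => σ y z) y)‖
        ≤ Kf * (2 * (C₀ * (1 + ‖z‖))) * ‖x - y‖ ^ (q - 1) := by
      refine (ContinuousLinearMap.opNorm_comp_le _ _).trans ?_
      have h1 : ‖fderiv ℝ f (y + σ y z)‖ *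
          ‖fderiv ℝ (fun y => σ y z) x - fderiv ℝ (fun y => σ y z) y‖ ≤
          Kf * (2 * (C₀ * (1 + ‖z‖)) * ‖x - y‖ ^ (q - 1)) :=
        mul_le_mul (hKf _) hDs (norm_nonneg _) hK0
      refine h1.trans (le_of_eq ?_)
      ring
    have hT3 : ‖fderiv ℝ f x - fderiv ℝ f y‖ ≤ Hf * ‖x - y‖ ^ (q - 1) := hHf x y
    -- assemble
    have hsum : ‖F' x z - F' y z‖ ≤
        (Hf * ((1 + 2 * C₀) ^ 2 * (1 + ‖z‖ ^ q)) + Kf * (2 * (C₀ * (1 + ‖z‖))) + Hf)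
          * ‖x - y‖ ^ (q - 1) := by
      calc ‖F' x z - F' y z‖ ≤ _ := hsplit
        _ ≤ _ := by
          rw [add_mul, add_mul]
          exact add_le_add (add_le_add hT1 hT2) hT3
    refine hsum.trans ?_
    have hcoef : Hf * ((1 + 2 * C₀) ^ 2 * (1 + ‖z‖ ^ q)) + Kf * (2 * (C₀ * (1 + ‖z‖))) + Hf
        ≤ (Mf + Kf + Hf) * C * (1 + ‖z‖ ^ q) := by
      rw [hCdef]
      have hW1 : (1:ℝ) ≤ 1 + ‖z‖ ^ q := by linarith
      have h2 : Kf * (2 * (C₀ * (1 + ‖z‖))) ≤ Kf * (4 * C₀ * (1 + ‖z‖ ^ q)) := by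
        have : 2 * (C₀ * (1 + ‖z‖)) ≤ 4 * C₀ * (1 + ‖z‖ ^ q) := by
          linarith [mul_le_mul_of_nonneg_left ht1 hC₀.le, mul_nonneg hC₀.le htq]
        exact mul_le_mul_of_nonneg_left this hK0
      have h3 : Hf ≤ Hf * (1 + ‖z‖ ^ q) := le_mul_of_one_le_right hH0 hW1
      have h4 : Hf * ((1 + 2 * C₀) ^ 2 * (1 + ‖z‖ ^ q)) + Kf * (4 * C₀ * (1 + ‖z‖ ^ q))
          + Hf * (1 + ‖z‖ ^ q) ≤ (Mf + Kf + Hf) * (3 * (1 + 2 * C₀) ^ 2) * (1 + ‖z‖ ^ q) := by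
        have hw : (0:ℝ) ≤ 1 + ‖z‖ ^ q := by linarith
        have hinner : Hf * (1 + 2 * C₀) ^ 2 + Kf * (4 * C₀) + Hf
            ≤ (Mf + Kf + Hf) * (3 * (1 + 2 * C₀) ^ 2) := coef_ineq hC₀ hM0 hK0 hH0
        calc Hf * ((1 + 2 * C₀) ^ 2 * (1 + ‖z‖ ^ q)) + Kf * (4 * C₀ * (1 + ‖z‖ ^ q))
              + Hf * (1 + ‖z‖ ^ q)
            = (Hf * (1 + 2 * C₀) ^ 2 + Kf * (4 * C₀) + Hf) * (1 + ‖z‖ ^ q) := by ring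
          _ ≤ ((Mf + Kf + Hf) * (3 * (1 + 2 * C₀) ^ 2)) * (1 + ‖z‖ ^ q) :=
              mul_le_mul_of_nonneg_right hinner hw
          _ = (Mf + Kf + Hf) * (3 * (1 + 2 * C₀) ^ 2) * (1 + ‖z‖ ^ q) := by ring
      linarith
    calc (Hf * ((1 + 2 * C₀) ^ 2 * (1 + ‖z‖ ^ q)) + Kf * (2 * (C₀ * (1 + ‖z‖))) + Hf)
          * ‖x - y‖ ^ (q - 1)
        ≤ ((Mf + Kf + Hf) * C * (1 + ‖z‖ ^ q)) * ‖x - y‖ ^ (q - 1) :=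
          mul_le_mul_of_nonneg_right hcoef hP
      _ = (Mf + Kf + Hf) * C * ‖x - y‖ ^ (q - 1) * (1 + ‖z‖ ^ q) := by ring
  -- the three bounds
  have bound1 : ∀ x : EuclideanSpace ℝ (Fin d), |∫ z, (f (x + σ x z) - f x) ∂ν| ≤
      C * (Mf + Kf + Hf) * ∫ z, (1 + ‖z‖ ^ q) ∂ν := by
    intro x
    have h1 : ‖∫ z, (f (x + σ x z) - f x) ∂ν‖ ≤ ∫ z, 2 * Mf * (1 + ‖z‖ ^ q) ∂ν := by
      refine norm_integral_le_of_norm_le (hInt1.const_mul (2 * Mf)) (ae_of_all _ fun z => ?_)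
      have h2 := hMf (x + σ x z); have h3 := hMf x
      have h4 : (0:ℝ) ≤ ‖z‖ ^ q := Real.rpow_nonneg (norm_nonneg z) q
      rw [Real.norm_eq_abs]
      calc |f (x + σ x z) - f x| ≤ |f (x + σ x z)| + |f x| := abs_sub _ _
        _ ≤ 2 * Mf := by linarith
        _ ≤ 2 * Mf * (1 + ‖z‖ ^ q) := by nlinarith
    rw [Real.norm_eq_abs] at h1
    rw [integral_const_mul] at h1
    refine h1.trans ?_
    have hsum : (0:ℝ) ≤ Mf + Kf + Hf := by linarith
    have : 2 * Mf ≤ C * (Mf + Kf + Hf) := by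
      rw [hCdef]
      nlinarith [mul_nonneg (show (0:ℝ) ≤ 3 * (1 + 2 * C₀) ^ 2 - 2 by nlinarith) hsum]
    exact mul_le_mul_of_nonneg_right this hIw
  have bound2 : ∀ x : EuclideanSpace ℝ (Fin d), ‖∫ z, F' x z ∂ν‖ ≤
      C * (Mf + Kf + Hf) * ∫ z, (1 + ‖z‖ ^ q) ∂ν := by
    intro x
    have h1 : ‖∫ z, F' x z ∂ν‖ ≤ ∫ z, Kf * (2 + 2 * C₀) * (1 + ‖z‖ ^ q) ∂ν := by
      refine norm_integral_le_of_norm_le (hInt1.const_mul _) ?_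
      filter_upwards [hae] with z hz
      exact hF'bd z hz x
    rw [integral_const_mul] at h1
    refine h1.trans ?_
    have hsum : (0:ℝ) ≤ Mf + Kf + Hf := by linarith
    have : Kf * (2 + 2 * C₀) ≤ C * (Mf + Kf + Hf) := by
      rw [hCdef]
      nlinarith [mul_nonneg (show (0:ℝ) ≤ 3 * (1 + 2 * C₀) ^ 2 - (2 + 2 * C₀) by nlinarith) hsum,
        mul_le_mul_of_nonneg_right (show Kf ≤ Mf + Kf + Hf by linarith)
          (show (0:ℝ) ≤ 2 + 2 * C₀ by linarith)]
    exact mul_le_mul_of_nonneg_right this hIw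
  have bound3 : ∀ x y : EuclideanSpace ℝ (Fin d), ‖(∫ z, F' x z ∂ν) - ∫ z, F' y z ∂ν‖ ≤
      (C * (Mf + Kf + Hf) * ∫ z, (1 + ‖z‖ ^ q) ∂ν) * ‖x - y‖ ^ (q - 1) := by
    intro x y
    rw [← integral_sub (hIntF' x) (hIntF' y)]
    have h1 : ‖∫ z, (F' x z - F' y z) ∂ν‖ ≤
        ∫ z, ((Mf + Kf + Hf) * C * ‖x - y‖ ^ (q - 1)) * (1 + ‖z‖ ^ q) ∂ν :=
      norm_integral_le_of_norm_le (hInt1.const_mul _) (hF'hold x y)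
    rw [integral_const_mul] at h1
    refine h1.trans (le_of_eq ?_)
    ring
  -- smoothness
  have hcd : ContDiff ℝ 1 (fun x => ∫ z, (f (x + σ x z) - f x) ∂ν) := by
    rw [contDiff_one_iff_fderiv]
    constructor
    · exact fun x => (hhas x).differentiableAt
    · have hfdF : (fderiv ℝ (fun x => ∫ z, (f (x + σ x z) - f x) ∂ν))
          = fun x => ∫ z, F' x z ∂ν := funext hfd2
      rw [hfdF]
      refine continuous_iff_continuousAt.mpr fun x => ?_
      rw [ContinuousAt, ← tendsto_sub_nhds_zero_iff]
      have hb : ∀ y : EuclideanSpace ℝ (Fin d),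
          ‖(∫ z, F' y z ∂ν) - ∫ z, F' x z ∂ν‖ ≤
          (C * (Mf + Kf + Hf) * ∫ z, (1 + ‖z‖ ^ q) ∂ν) * ‖y - x‖ ^ (q - 1) :=
        fun y => bound3 y x
      refine squeeze_zero_norm hb ?_
      have h1 : Tendsto (fun y : EuclideanSpace ℝ (Fin d) => ‖y - x‖) (𝓝 x) (𝓝 0) :=
        tendsto_norm_sub_self x
      have h2 : ContinuousAt (fun r : ℝ => r ^ (q - 1)) 0 :=
        Real.continuousAt_rpow_const 0 (q - 1) (Or.inr (by linarith))
      have h3 := h2.tendsto.comp h1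
      rw [Real.zero_rpow (show q - 1 ≠ 0 from ne_of_gt (by linarith))] at h3
      have h4 := h3.const_mul (C * (Mf + Kf + Hf) * ∫ z, (1 + ‖z‖ ^ q) ∂ν)
      rw [mul_zero] at h4
      exact h4
  refine ⟨hcd, bound1, ?_, ?_⟩
  · intro x
    rw [hfd2 x]; exact bound2 x
  · intro x y
    rw [hfd2 x, hfd2 y]; exact bound3 x y
end

section
/- Let C, K > 0 and C₁ ∈ (0, 1/2]. Let σ : ℝ^d × ℝ^d → ℝ^d be such that for each z, x ↦ σ(x,z) is continuously differentiable with |σ(x,z)| ≤ C min(1,|z|) and ‖∇_x σ(x,z)‖ ≤ C₁ min(1,|z|) for all x (so that I + ∇_x σ(x,z) is invertible with ‖(I + ∇_x σ(x,z))^{−1}‖ ≤ 2). Let V : ℝ^d → ℝ^{d×d} be twice continuously differentiable with ‖V‖_∞, ‖∇V‖_∞, ‖∇²V‖_∞ ≤ K. Define Q(x,z) := (I + ∇_x σ(x,z))^{−1} − I, H_V(x,z) := V(x + σ(x,z)) − V(x) + Q(x,z)·V(x + σ(x,z)), and G_V(x,z) := H_V(x,z) + ∇_x σ(x,z)·V(x)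 − σ(x,z)·∇V(x). Then there is a constant C' depending only on C, C₁, K and d such that for all x, z: |H_V(x,z)| ≤ C' min(1,|z|) and |G_V(x,z)| ≤ C' min(1,|z|²). -/
set_option maxHeartbeats 1000000
set_option synthInstance.maxHeartbeats 400000


open Set

lemma aux_fderiv_lip {E F : Type*} [NormedAddCommGroup E] [NormedSpace ℝ E]
    [NormedAddCommGroup F] [NormedSpace ℝ F] (V : E → F) (hV : ContDiff ℝ 2 V) (K : ℝ)
    (hV2 : ∀ x, ‖iteratedFDeriv ℝ 2 V x‖ ≤ K) (a b : E) :
    ‖fderiv ℝ V a - fderiv ℝ V b‖ ≤ K * ‖a - b‖ := by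
  have hV'c : ContDiff ℝ 1 (fderiv ℝ V) := hV.fderiv_right (by norm_num)
  have hV'd : Differentiable ℝ (fderiv ℝ V) := hV'c.differentiable (by norm_num)
  have hfd2 : ∀ y, ‖fderiv ℝ (fderiv ℝ V) y‖ ≤ K := by
    intro y
    have := hV2 y
    rwa [← norm_iteratedFDeriv_fderiv, ← norm_iteratedFDeriv_fderiv,
      norm_iteratedFDeriv_zero] at this
  exact Convex.norm_image_sub_le_of_norm_fderiv_le (fun y _ => hV'd y)
    (fun y _ => hfd2 y) convex_univ (mem_univ b) (mem_univ a)

/-- With `|σ(x,z)| ≤ C min(1,|z|)`, `‖∇ₓσ(x,z)‖ ≤ C₁ min(1,|z|) ≤ 1/2`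
(so that `I + ∇ₓσ` is invertible), `V : ℝ^d → ℝ^{d×d}` C² with `‖V‖,‖∇V‖,‖∇²V‖ ≤ K`,
and `Q := (I + ∇ₓσ)⁻¹ - I`, `H_V := V(x+σ) - V(x) + Q·V(x+σ)`,
`G_V := H_V + ∇ₓσ·V(x) - σ·∇V(x)`, there is `C'` depending only on `C, C₁, K, d` with
`|H_V(x,z)| ≤ C' min(1,|z|)` and `|G_V(x,z)| ≤ C' min(1,|z|²)`. -/
theorem stmt_12 {d : ℕ} (C K C₁ : ℝ) (hC : 0 < C) (hK : 0 < K)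
    (hC₁ : C₁ ∈ Ioc (0:ℝ) (1 / 2))
    (σ : EuclideanSpace ℝ (Fin d) → EuclideanSpace ℝ (Fin d) → EuclideanSpace ℝ (Fin d))
    (hσdiff : ∀ z, ContDiff ℝ 1 (fun x => σ x z))
    (hσbd : ∀ x z, ‖σ x z‖ ≤ C * min 1 ‖z‖)
    (hσder : ∀ x z, ‖fderiv ℝ (fun y => σ y z) x‖ ≤ C₁ * min 1 ‖z‖)
    (V : EuclideanSpace ℝ (Fin d) →
      (EuclideanSpace ℝ (Fin d) →L[ℝ] EuclideanSpace ℝ (Fin d)))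
    (hV : ContDiff ℝ 2 V)
    (hV0 : ∀ x, ‖V x‖ ≤ K)
    (hV1 : ∀ x, ‖iteratedFDeriv ℝ 1 V x‖ ≤ K)
    (hV2 : ∀ x, ‖iteratedFDeriv ℝ 2 V x‖ ≤ K) :
    ∃ C' > (0:ℝ), ∀ x z,
      ‖V (x + σ x z) - V x +
          (Ring.inverse (1 + fderiv ℝ (fun y => σ y z) x) - 1) * V (x + σ x z)‖ ≤
        C' * min 1 ‖z‖ ∧
      ‖V (x + σ x z) - V x +
          (Ring.inverse (1 + fderiv ℝ (fun y => σ y z) x) - 1) * V (x + σ x z) +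
          fderiv ℝ (fun y => σ y z) x * V x - fderiv ℝ V x (σ x z)‖ ≤
        C' * min 1 (‖z‖ ^ 2) := by
  obtain ⟨hC₁0, hC₁half⟩ := hC₁
  -- basic facts about V
  have hVd : Differentiable ℝ V := hV.differentiable (by norm_num)
  have hfd : ∀ y, ‖fderiv ℝ V y‖ ≤ K := by
    intro y
    have := hV1 y
    rwa [← norm_iteratedFDeriv_fderiv, norm_iteratedFDeriv_zero] at this
  have hVlip : ∀ a b, ‖V a - V b‖ ≤ K * ‖a - b‖ := by
    intro a b
    exact Convex.norm_image_sub_le_of_norm_fderiv_le (fun y _ => hVd y)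
      (fun y _ => hfd y) convex_univ (mem_univ b) (mem_univ a)
  have hV'c : ContDiff ℝ 1 (fderiv ℝ V) := hV.fderiv_right (by norm_num)
  have hV'd : Differentiable ℝ (fderiv ℝ V) := hV'c.differentiable (by norm_num)
  have hV'lip : ∀ a b, ‖fderiv ℝ V a - fderiv ℝ V b‖ ≤ K * ‖a - b‖ := by
    intro a b
    exact aux_fderiv_lip V hV K hV2 a b
  refine ⟨K*C + 2*C₁*K + K*C^2 + 2*C₁^2*K + C₁*K*C + 1, by positivity, fun x z => ?_⟩
  set m := min 1 ‖z‖ with hm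
  have hm0 : 0 ≤ m := le_min one_pos.le (norm_nonneg _)
  have hm1 : m ≤ 1 := min_le_left _ _
  have hmsq : m * m = min 1 (‖z‖ ^ 2) := by
    rcases le_total ‖z‖ 1 with h | h
    · rw [hm, min_eq_right h, min_eq_right (by nlinarith [norm_nonneg z])]
      ring
    · rw [hm, min_eq_left h, min_eq_left (by nlinarith)]
      ring
  set A := fderiv ℝ (fun y => σ y z) x with hAdef
  have hA : ‖A‖ ≤ C₁ * m := hσder x z
  have hAhalf : ‖A‖ ≤ 1 / 2 := hA.trans (by nlinarith)
  have hAlt : ‖-A‖ < 1 := by rw [norm_neg]; linarith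
  set u : (EuclideanSpace ℝ (Fin d) →L[ℝ] EuclideanSpace ℝ (Fin d))ˣ :=
    Units.oneSub (-A) hAlt with hu
  have huval : (u : EuclideanSpace ℝ (Fin d) →L[ℝ] EuclideanSpace ℝ (Fin d)) = 1 + A := by
    rw [hu, Units.val_oneSub, sub_neg_eq_add]
  have hinv : Ring.inverse (1 + A) = (↑u⁻¹ :
      EuclideanSpace ℝ (Fin d) →L[ℝ] EuclideanSpace ℝ (Fin d)) := by
    rw [← huval, Ring.inverse_unit]
  set B := (↑u⁻¹ : EuclideanSpace ℝ (Fin d) →L[ℝ] EuclideanSpace ℝ (Fin d)) with hB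
  have hBu : B * (1 + A) = 1 := by rw [← huval]; exact u.inv_mul
  have hsum : B + B * A = 1 := by
    have := hBu; rwa [mul_add, mul_one] at this
  have hB1 : B = 1 - B * A := by rw [← hsum]; abel
  have h1B : 1 - B = B * A := by rw [← hsum]; abel
  have hBnorm : ‖B‖ ≤ 2 := by
    have h1 : ‖B‖ ≤ ‖(1 : EuclideanSpace ℝ (Fin d) →L[ℝ] EuclideanSpace ℝ (Fin d))‖
        + ‖B‖ * ‖A‖ := by
      calc ‖B‖ = ‖1 - B * A‖ := by rw [← hB1]
        _ ≤ ‖(1 : EuclideanSpace ℝ (Fin d) →L[ℝ] EuclideanSpace ℝ (Fin d))‖ + ‖B * A‖ :=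
          norm_sub_le _ _
        _ ≤ _ := by gcongr; exact norm_mul_le _ _
    have hone : ‖(1 : EuclideanSpace ℝ (Fin d) →L[ℝ] EuclideanSpace ℝ (Fin d))‖ ≤ 1 := by
      rw [ContinuousLinearMap.one_def]; exact ContinuousLinearMap.norm_id_le
    nlinarith [norm_nonneg B, norm_nonneg A]
  have hQeq : B - 1 = -(B * A) := by rw [← h1B]; abel
  have hQnorm : ‖B - 1‖ ≤ 2 * ‖A‖ := by
    rw [hQeq, norm_neg]
    calc ‖B * A‖ ≤ ‖B‖ * ‖A‖ := norm_mul_le _ _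
      _ ≤ 2 * ‖A‖ := by gcongr
  have hQA : B - 1 + A = B * A * A := by
    calc B - 1 + A = A - (1 - B) := by abel
      _ = A - B * A := by rw [h1B]
      _ = (1 - B) * A := by rw [sub_mul, one_mul]
      _ = B * A * A := by rw [h1B]
  have hQAnorm : ‖B - 1 + A‖ ≤ 2 * (‖A‖ * ‖A‖) := by
    rw [hQA]
    calc ‖B * A * A‖ ≤ ‖B * A‖ * ‖A‖ := norm_mul_le _ _
      _ ≤ ‖B‖ * ‖A‖ * ‖A‖ := by gcongr; exact norm_mul_le _ _
      _ ≤ 2 * (‖A‖ * ‖A‖) := by nlinarith [norm_nonneg A, norm_nonneg B]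
  have hσb : ‖σ x z‖ ≤ C * m := hσbd x z
  -- Taylor estimate
  have hTaylor : ‖V (x + σ x z) - V x - fderiv ℝ V x (σ x z)‖ ≤ K * ‖σ x z‖ * ‖σ x z‖ := by
    have hmem : x + σ x z ∈ Metric.closedBall x ‖σ x z‖ := by
      simp [Metric.mem_closedBall, dist_eq_norm]
    have := (convex_closedBall x ‖σ x z‖).norm_image_sub_le_of_norm_fderiv_le'
      (f := V) (φ := fderiv ℝ V x) (C := K * ‖σ x z‖)
      (fun y _ => hVd y)
      (fun y hy => by
        calc ‖fderiv ℝ V y - fderiv ℝ V x‖ ≤ K * ‖y - x‖ := hV'lip y x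
          _ ≤ K * ‖σ x z‖ := by
              gcongr
              simpa [Metric.mem_closedBall, dist_eq_norm] using hy)
      (Metric.mem_closedBall_self (norm_nonneg _)) hmem
    simpa [add_sub_cancel_left] using this
  rw [hinv]
  constructor
  · calc ‖V (x + σ x z) - V x + (B - 1) * V (x + σ x z)‖
        ≤ ‖V (x + σ x z) - V x‖ + ‖(B - 1) * V (x + σ x z)‖ := norm_add_le _ _
      _ ≤ K * ‖σ x z‖ + ‖B - 1‖ * ‖V (x + σ x z)‖ := by
          gcongr
          · simpa [add_sub_cancel_left] using hVlip (x + σ x z) x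
          · exact norm_mul_le _ _
      _ ≤ K * (C * m) + (2 * (C₁ * m)) * K := by
          gcongr
          · exact hQnorm.trans (by gcongr)
          · exact hV0 _
      _ = (K*C + 2*C₁*K) * m := by ring
      _ ≤ (K*C + 2*C₁*K + K*C^2 + 2*C₁^2*K + C₁*K*C + 1) * m := by
          have : (0:ℝ) ≤ (K*C^2 + 2*C₁^2*K + C₁*K*C + 1) * m := by positivity
          nlinarith
  · have key : V (x + σ x z) - V x + (B - 1) * V (x + σ x z) + A * V x - fderiv ℝ V x (σ x z)
        = (V (x + σ x z) - V x - fderiv ℝ V x (σ x z))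
          + (B - 1 + A) * V (x + σ x z) + A * (V x - V (x + σ x z)) := by
      rw [add_mul, mul_sub]; abel
    rw [key]
    have e1 : ‖V (x + σ x z) - V x - fderiv ℝ V x (σ x z)‖ ≤ K * (C * m) * (C * m) :=
      hTaylor.trans (by
        have h0 : (0:ℝ) ≤ ‖σ x z‖ := norm_nonneg _
        have h1 : ‖σ x z‖ * ‖σ x z‖ ≤ (C * m) * (C * m) :=
          mul_le_mul hσb hσb h0 (h0.trans hσb)
        nlinarith [mul_le_mul_of_nonneg_left h1 hK.le])
    have hQAbd : ‖B - 1 + A‖ ≤ 2 * (C₁ * m) * (C₁ * m) :=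
      hQAnorm.trans (by nlinarith [norm_nonneg A])
    have e2 : ‖(B - 1 + A) * V (x + σ x z)‖ ≤ 2 * (C₁ * m) * (C₁ * m) * K :=
      (norm_mul_le _ _).trans (mul_le_mul hQAbd (hV0 _) (norm_nonneg _) (by positivity))
    have hVxlip : ‖V x - V (x + σ x z)‖ ≤ K * (C * m) := by
      have h := hVlip x (x + σ x z)
      rw [sub_add_cancel_left, norm_neg] at h
      exact h.trans (by nlinarith [norm_nonneg (σ x z)])
    have e3 : ‖A * (V x - V (x + σ x z))‖ ≤ C₁ * m * (K * (C * m)) :=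
      (norm_mul_le _ _).trans (mul_le_mul hA hVxlip (norm_nonneg _) (by positivity))
    have hsum3 : ‖(V (x + σ x z) - V x - fderiv ℝ V x (σ x z))
          + (B - 1 + A) * V (x + σ x z) + A * (V x - V (x + σ x z))‖
        ≤ ‖V (x + σ x z) - V x - fderiv ℝ V x (σ x z)‖
          + ‖(B - 1 + A) * V (x + σ x z)‖ + ‖A * (V x - V (x + σ x z))‖ :=
      (norm_add_le _ _).trans (by gcongr; exact norm_add_le _ _)
    have hms : m * m ≤ min 1 (‖z‖ ^ 2) := hmsq.le
    have hms' : min 1 (‖z‖ ^ 2) = m * m := hmsq.symm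
    calc ‖(V (x + σ x z) - V x - fderiv ℝ V x (σ x z))
          + (B - 1 + A) * V (x + σ x z) + A * (V x - V (x + σ x z))‖
        ≤ K * (C * m) * (C * m) + 2 * (C₁ * m) * (C₁ * m) * K + C₁ * m * (K * (C * m)) := by
          linarith [hsum3, e1, e2, e3]
      _ = (K*C^2 + 2*C₁^2*K + C₁*K*C) * (m * m) := by ring
      _ ≤ (K*C + 2*C₁*K + K*C^2 + 2*C₁^2*K + C₁*K*C + 1) * (m * m) := by
          have : (0:ℝ) ≤ (K*C + 2*C₁*K + 1) * (m * m) := by positivity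
          nlinarith
      _ = (K*C + 2*C₁*K + K*C^2 + 2*C₁^2*K + C₁*K*C + 1) * min 1 (‖z‖ ^ 2) := by rw [hms']
end

section
/- Let α ∈ (0,2), c₀, C₀ > 0, and let ν be a Borel measure on ℝ^d∖{0} such that for all ε ∈ (0,1): ∫_{|z|≤ε}|z|³ ν(dz) ≥ c₀ ε^{3−α} and ∫_{|z|≤ε}|z|⁴ ν(dz) ≤ C₀ ε^{4−α}. Let β > 0, q ≥ 1+β, c ∈ (0,1], λ ≥ 1, and let g : ℝ^d → [0,∞) be measurable with g(z) ≤ λ^β for all z and |g(z) − g(0)| ≤ λ^β |z| for all z. Then ∫_{|z| ≤ (cλ^{−q})^{1/3}} (1 − e^{−λ g(z) |z|³}) ν(dz) ≥ (c₀ c^{(3−α)/3}/e) · g(0) · λ^{1 − (3−α)q/3} − (C₀ c^{(4−α)/3}/e) · λ^{1 + β − (4−α)q/3}. -/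
open MeasureTheory Set
open Topology Filter

lemma exp_aux13 {x : ℝ} (h0 : 0 ≤ x) (h1 : x ≤ 1) :
    x / Real.exp 1 ≤ 1 - Real.exp (-x) := by
  have hconv := convexOn_exp.2 (Set.mem_univ (0:ℝ)) (Set.mem_univ (-1:ℝ))
      (by linarith : (0:ℝ) ≤ 1 - x) h0 (by ring)
  simp only [smul_eq_mul, mul_zero, mul_neg, mul_one, zero_add, Real.exp_zero] at hconv
  have he : Real.exp (-1) * Real.exp 1 = 1 := by rw [← Real.exp_add]; norm_num
  have h2 : (2:ℝ) ≤ Real.exp 1 := by have := Real.exp_one_gt_d9; linarith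
  have hepos : (0:ℝ) < Real.exp 1 := Real.exp_pos 1
  rw [div_le_iff₀ hepos]
  nlinarith [Real.exp_pos (-1)]


/-- Let `α ∈ (0,2)` and `ν` satisfy `∫_{|z|≤ε}|z|³ ν(dz) ≥ c₀ ε^(3-α)` and
`∫_{|z|≤ε}|z|⁴ ν(dz) ≤ C₀ ε^(4-α)` for `ε ∈ (0,1)`. If `β > 0`, `q ≥ 1+β`, `c ∈ (0,1]`,
`λ ≥ 1` and `g ≥ 0` satisfies `g(z) ≤ λ^β` and `|g(z) - g(0)| ≤ λ^β |z|`, then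
`∫_{|z| ≤ (cλ^{-q})^{1/3}} (1 - e^{-λ g(z)|z|³}) ν(dz)
  ≥ (c₀ c^{(3-α)/3}/e) g(0) λ^{1-(3-α)q/3} - (C₀ c^{(4-α)/3}/e) λ^{1+β-(4-α)q/3}`. -/
theorem stmt_13 {d : ℕ} (α c₀ C₀ : ℝ) (hα : α ∈ Ioo (0:ℝ) 2) (hc₀ : 0 < c₀) (hC₀ : 0 < C₀)
    (ν : Measure (EuclideanSpace ℝ (Fin d)))
    (hν0 : ν {0} = 0)
    (h3int : IntegrableOn (fun z => ‖z‖ ^ 3) {z | ‖z‖ ≤ 1} ν)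
    (h4int : IntegrableOn (fun z => ‖z‖ ^ 4) {z | ‖z‖ ≤ 1} ν)
    (h3 : ∀ ε ∈ Ioo (0:ℝ) 1, c₀ * ε ^ (3 - α) ≤ ∫ z in {z | ‖z‖ ≤ ε}, ‖z‖ ^ 3 ∂ν)
    (h4 : ∀ ε ∈ Ioo (0:ℝ) 1, ∫ z in {z | ‖z‖ ≤ ε}, ‖z‖ ^ 4 ∂ν ≤ C₀ * ε ^ (4 - α))
    (β q c l : ℝ) (hβ : 0 < β) (hq : 1 + β ≤ q) (hc : c ∈ Ioc (0:ℝ) 1) (hl : 1 ≤ l)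
    (g : EuclideanSpace ℝ (Fin d) → ℝ) (hgmeas : Measurable g) (hg0 : ∀ z, 0 ≤ g z)
    (hgbd : ∀ z, g z ≤ l ^ β) (hglip : ∀ z, |g z - g 0| ≤ l ^ β * ‖z‖) :
    (c₀ * c ^ ((3 - α) / 3) / Real.exp 1) * g 0 * l ^ (1 - (3 - α) * q / 3) -
      (C₀ * c ^ ((4 - α) / 3) / Real.exp 1) * l ^ (1 + β - (4 - α) * q / 3) ≤
    ∫ z in {z | ‖z‖ ≤ (c * l ^ (-q)) ^ ((1:ℝ) / 3)},
      (1 - Real.exp (-(l * g z * ‖z‖ ^ 3))) ∂ν := by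
  obtain ⟨hα0, hα2⟩ := hα
  obtain ⟨hc0, hc1⟩ := hc
  have hl0 : (0:ℝ) < l := lt_of_lt_of_le one_pos hl
  have hlq : (0:ℝ) < l ^ (-q) := Real.rpow_pos_of_pos hl0 _
  set E : ℝ := (c * l ^ (-q)) ^ ((1:ℝ)/3) with hEdef
  have hclq_pos : 0 < c * l ^ (-q) := mul_pos hc0 hlq
  have hclq_le1 : c * l ^ (-q) ≤ 1 := by
    have h1 : l ^ (-q) ≤ 1 := Real.rpow_le_one_of_one_le_of_nonpos hl (by linarith)
    nlinarith
  have hE0 : 0 < E := Real.rpow_pos_of_pos hclq_pos _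
  have hE1 : E ≤ 1 := Real.rpow_le_one hclq_pos.le hclq_le1 (by norm_num)
  have hE3 : E ^ (3:ℕ) = c * l ^ (-q) := by
    rw [hEdef, ← Real.rpow_natCast ((c * l ^ (-q)) ^ ((1:ℝ)/3)) 3,
        ← Real.rpow_mul hclq_pos.le]
    norm_num
  set f : EuclideanSpace ℝ (Fin d) → ℝ :=
    fun z => 1 - Real.exp (-(l * g z * ‖z‖ ^ 3)) with hfdef
  have hfmeas : Measurable f :=
    measurable_const.sub
      ((((measurable_const.mul hgmeas).mul (measurable_norm.pow_const 3)).neg).exp)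
  have hx_nonneg : ∀ z : EuclideanSpace ℝ (Fin d), 0 ≤ l * g z * ‖z‖ ^ 3 :=
    fun z => mul_nonneg (mul_nonneg hl0.le (hg0 z)) (pow_nonneg (norm_nonneg z) 3)
  have hfnonneg : ∀ z, 0 ≤ f z := by
    intro z
    have h1 : Real.exp (-(l * g z * ‖z‖ ^ 3)) ≤ 1 := by
      rw [Real.exp_le_one_iff]; linarith [hx_nonneg z]
    simp only [hfdef]; linarith
  have hll : l ^ ((1:ℝ)+β) = l * l ^ β := by rw [Real.rpow_add hl0, Real.rpow_one]
  have hfub : ∀ z, f z ≤ l ^ ((1:ℝ)+β) * ‖z‖ ^ 3 := by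
    intro z
    have h1 : -(l * g z * ‖z‖ ^ 3) + 1 ≤ Real.exp (-(l * g z * ‖z‖ ^ 3)) :=
      Real.add_one_le_exp _
    have h2 : l * g z * ‖z‖ ^ 3 ≤ l ^ ((1:ℝ)+β) * ‖z‖ ^ 3 := by
      rw [hll]
      exact mul_le_mul_of_nonneg_right (mul_le_mul_of_nonneg_left (hgbd z) hl0.le)
        (pow_nonneg (norm_nonneg z) 3)
    simp only [hfdef]; linarith
  have hSsub : {z : EuclideanSpace ℝ (Fin d) | ‖z‖ ≤ E} ⊆ {z | ‖z‖ ≤ 1} :=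
    fun z hz => le_trans hz hE1
  have hfint : IntegrableOn f {z | ‖z‖ ≤ E} ν := by
    apply Integrable.mono' ((h3int.mono_set hSsub).const_mul (l ^ ((1:ℝ)+β)))
      hfmeas.aestronglyMeasurable
    filter_upwards with z
    rw [Real.norm_eq_abs, abs_of_nonneg (hfnonneg z)]
    exact hfub z
  have hA : (0:ℝ) ≤ l / Real.exp 1 := div_nonneg hl0.le (Real.exp_pos 1).le
  have hlb : (0:ℝ) ≤ l ^ β := (Real.rpow_pos_of_pos hl0 β).le
  -- main estimate for each δ ∈ (0,1)
  have key : ∀ δ ∈ Ioo (0:ℝ) 1,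
      l / Real.exp 1 * (g 0 * (c₀ * (δ*E) ^ ((3:ℝ) - α)) - l ^ β * (C₀ * (δ*E) ^ ((4:ℝ) - α)))
        ≤ ∫ z in {z | ‖z‖ ≤ E}, f z ∂ν := by
    intro δ hδ
    have hε0 : 0 < δ * E := mul_pos hδ.1 hE0
    have hεE : δ * E ≤ E := by nlinarith [hδ.2.le, hE0.le]
    have hε1 : δ * E < 1 := by nlinarith [hδ.2, hE0, hE1]
    have hTsub : {z : EuclideanSpace ℝ (Fin d) | ‖z‖ ≤ δ*E} ⊆ {z | ‖z‖ ≤ E} :=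
      fun z hz => le_trans hz hεE
    have hTsub1 : {z : EuclideanSpace ℝ (Fin d) | ‖z‖ ≤ δ*E} ⊆ {z | ‖z‖ ≤ 1} :=
      fun z hz => le_trans hz hε1.le
    have hmeasT : MeasurableSet {z : EuclideanSpace ℝ (Fin d) | ‖z‖ ≤ δ*E} :=
      measurableSet_le measurable_norm measurable_const
    have hi3 : IntegrableOn (fun z => ‖z‖ ^ 3) {z | ‖z‖ ≤ δ*E} ν := h3int.mono_set hTsub1
    have hi4 : IntegrableOn (fun z => ‖z‖ ^ 4) {z | ‖z‖ ≤ δ*E} ν := h4int.mono_set hTsub1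
    have hpt : ∀ z ∈ {z : EuclideanSpace ℝ (Fin d) | ‖z‖ ≤ δ*E},
        l / Real.exp 1 * (g 0 * ‖z‖ ^ 3 - l ^ β * ‖z‖ ^ 4) ≤ f z := by
      intro z hz
      have hzE : ‖z‖ ≤ E := le_trans hz hεE
      have hx1 : l * g z * ‖z‖ ^ 3 ≤ 1 := by
        have hp3 : ‖z‖ ^ 3 ≤ E ^ 3 := pow_le_pow_left₀ (norm_nonneg z) hzE 3
        have h2 : l * g z * ‖z‖ ^ 3 ≤ l * l ^ β * E ^ 3 :=
          mul_le_mul (mul_le_mul_of_nonneg_left (hgbd z) hl0.le) hp3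
            (pow_nonneg (norm_nonneg z) 3) (mul_nonneg hl0.le hlb)
        have h3' : l * l ^ β * E ^ 3 = c * l ^ (1+β-q) := by
          rw [hE3, show (1+β-q:ℝ) = 1 + β + (-q) by ring, Real.rpow_add hl0,
            Real.rpow_add hl0, Real.rpow_one]
          ring
        have h4' : l ^ (1+β-q) ≤ 1 := Real.rpow_le_one_of_one_le_of_nonpos hl (by linarith)
        have h5 : c * l ^ (1+β-q) ≤ 1 := by
          nlinarith [Real.rpow_nonneg hl0.le (1+β-q)]
        linarith [h2, h3'.symm ▸ h2]
      have hmain := exp_aux13 (hx_nonneg z) hx1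
      have habs : g 0 - g z ≤ l ^ β * ‖z‖ := by
        have h := abs_le.mp (hglip z); linarith [h.1]
      have hkey2 : g 0 * ‖z‖ ^ 3 - l ^ β * ‖z‖ ^ 4 ≤ g z * ‖z‖ ^ 3 := by
        have hm := mul_le_mul_of_nonneg_right habs (pow_nonneg (norm_nonneg z) 3)
        nlinarith [pow_nonneg (norm_nonneg z) 3]
      have hstep : l / Real.exp 1 * (g 0 * ‖z‖ ^ 3 - l ^ β * ‖z‖ ^ 4)
          ≤ l * g z * ‖z‖ ^ 3 / Real.exp 1 := by
        calc l / Real.exp 1 * (g 0 * ‖z‖ ^ 3 - l ^ β * ‖z‖ ^ 4)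
            ≤ l / Real.exp 1 * (g z * ‖z‖ ^ 3) := mul_le_mul_of_nonneg_left hkey2 hA
          _ = l * g z * ‖z‖ ^ 3 / Real.exp 1 := by ring
      simp only [hfdef]
      linarith
    have step0 : ∫ z in {z | ‖z‖ ≤ δ*E}, f z ∂ν ≤ ∫ z in {z | ‖z‖ ≤ E}, f z ∂ν :=
      setIntegral_mono_set hfint (Filter.Eventually.of_forall hfnonneg)
        (HasSubset.Subset.eventuallyLE hTsub)
    have step1 : ∫ z in {z | ‖z‖ ≤ δ*E},
        (l / Real.exp 1 * (g 0 * ‖z‖ ^ 3 - l ^ β * ‖z‖ ^ 4)) ∂ν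
        ≤ ∫ z in {z | ‖z‖ ≤ δ*E}, f z ∂ν :=
      setIntegral_mono_on
        (((hi3.const_mul (g 0)).sub (hi4.const_mul (l ^ β))).const_mul (l / Real.exp 1))
        (hfint.mono_set hTsub) hmeasT hpt
    have step2 : ∫ z in {z | ‖z‖ ≤ δ*E},
        (l / Real.exp 1 * (g 0 * ‖z‖ ^ 3 - l ^ β * ‖z‖ ^ 4)) ∂ν
        = l / Real.exp 1 * (g 0 * (∫ z in {z | ‖z‖ ≤ δ*E}, ‖z‖ ^ 3 ∂ν)
            - l ^ β * (∫ z in {z | ‖z‖ ≤ δ*E}, ‖z‖ ^ 4 ∂ν)) := by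
      rw [integral_const_mul, integral_sub (hi3.const_mul (g 0)) (hi4.const_mul (l ^ β)),
        integral_const_mul, integral_const_mul]
    have h3' := h3 (δ*E) ⟨hε0, hε1⟩
    have h4' := h4 (δ*E) ⟨hε0, hε1⟩
    have step3 : l / Real.exp 1 * (g 0 * (c₀ * (δ*E) ^ ((3:ℝ) - α)) - l ^ β * (C₀ * (δ*E) ^ ((4:ℝ) - α)))
        ≤ l / Real.exp 1 * (g 0 * (∫ z in {z | ‖z‖ ≤ δ*E}, ‖z‖ ^ 3 ∂ν)
            - l ^ β * (∫ z in {z | ‖z‖ ≤ δ*E}, ‖z‖ ^ 4 ∂ν)) := by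
      apply mul_le_mul_of_nonneg_left _ hA
      have ha := mul_le_mul_of_nonneg_left h3' (hg0 0)
      have hb := mul_le_mul_of_nonneg_left h4' hlb
      linarith
    linarith [step2 ▸ step1]
  -- exponent computations
  have hcexp : ∀ s : ℝ, E ^ s = c ^ (s/3) * l ^ (-(q*s/3)) := by
    intro s
    rw [hEdef, ← Real.rpow_mul hclq_pos.le, Real.mul_rpow hc0.le hlq.le,
      ← Real.rpow_mul hl0.le]
    rw [show (1/3*s : ℝ) = s/3 by ring]
    congr 1
    · congr 1; ring
  have hΦ1 : l / Real.exp 1 * (g 0 * (c₀ * ((1:ℝ)*E) ^ ((3:ℝ) - α)) - l ^ β * (C₀ * ((1:ℝ)*E) ^ ((4:ℝ) - α)))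
      = (c₀ * c ^ ((3 - α) / 3) / Real.exp 1) * g 0 * l ^ (1 - (3 - α) * q / 3) -
        (C₀ * c ^ ((4 - α) / 3) / Real.exp 1) * l ^ (1 + β - (4 - α) * q / 3) := by
    rw [one_mul, hcexp (3-α), hcexp (4-α),
      show (1 - (3 - α) * q / 3 : ℝ) = 1 + (-(q*(3-α)/3)) by ring,
      show (1 + β - (4 - α) * q / 3 : ℝ) = 1 + β + (-(q*(4-α)/3)) by ring,
      Real.rpow_add hl0, Real.rpow_add hl0, Real.rpow_add hl0, Real.rpow_one]
    field_simp
  have hcont : ContinuousAt (fun δ : ℝ =>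
      l / Real.exp 1 * (g 0 * (c₀ * (δ*E) ^ ((3:ℝ) - α)) - l ^ β * (C₀ * (δ*E) ^ ((4:ℝ) - α)))) 1 := by
    have hmul : ContinuousAt (fun δ : ℝ => δ * E) 1 :=
      (continuous_id.mul continuous_const).continuousAt
    have h1 : ContinuousAt (fun δ : ℝ => (δ*E) ^ ((3:ℝ) - α)) 1 :=
      hmul.rpow_const (Or.inr (by linarith))
    have h2 : ContinuousAt (fun δ : ℝ => (δ*E) ^ ((4:ℝ) - α)) 1 :=
      hmul.rpow_const (Or.inr (by linarith))
    exact continuousAt_const.mul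
      ((continuousAt_const.mul (continuousAt_const.mul h1)).sub
        (continuousAt_const.mul (continuousAt_const.mul h2)))
  have htend := (hcont.tendsto).mono_left (nhdsWithin_le_nhds (s := Iio (1:ℝ)))
  rw [← hΦ1]
  refine le_of_tendsto htend ?_
  have hmem : Ioo (0:ℝ) 1 ∈ 𝓝[<] (1:ℝ) :=
    Ioo_mem_nhdsLT_of_mem ⟨one_pos, le_refl 1⟩
  exact Filter.eventually_of_mem hmem key
end
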